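/- arXiv:1205.3090 — 5 statements merged into one kernel-verified Lean document; each statement's English description precedes it below -/
import Mathlib

section
/- Let Γ be a finite chordal graph (every cycle of length at least 4 has a chord) that is not complete. Then the vertex set of Γ can be written as V(Γ) = V1 ∪ V2 where V1 and V2 are proper subsets, the induced subgraph on V1 ∩ V2 is a complete graph, and no vertex of V1 \ V2 is adjacent to any vertex of V2 \ V1. -/
namespace DiracAux
open SimpleGraph

variable {V : Type*}

/-- The graph `Γ` with all vertices in `S` deleted (kept as isolated vertices). -/
def del (Γ : SimpleGraph V) (S : Set V) : SimpleGraph V where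
  Adj u v := Γ.Adj u v ∧ u ∉ S ∧ v ∉ S
  symm := ⟨fun u v ⟨h, h1, h2⟩ => ⟨h.symm, h2, h1⟩⟩
  loopless := ⟨fun v ⟨h, _, _⟩ => Γ.irrefl h⟩

lemma del_adj {Γ : SimpleGraph V} {S : Set V} {u v : V} :
    (del Γ S).Adj u v ↔ Γ.Adj u v ∧ u ∉ S ∧ v ∉ S := Iff.rfl

/-- endpoints of del-walks stay out of `S` (given the start is out). -/
lemma del_walk_not_mem {Γ : SimpleGraph V} {S : Set V} {u v : V}
    (p : (del Γ S).Walk u v) (hu : u ∉ S) : v ∉ S := by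
  induction p with
  | nil => exact hu
  | cons h p ih => exact ih h.2.2

lemma del_reachable_not_mem {Γ : SimpleGraph V} {S : Set V} {u v : V}
    (h : (del Γ S).Reachable u v) (hu : u ∉ S) : v ∉ S := by
  obtain ⟨p⟩ := h
  exact del_walk_not_mem p hu

/-- every vertex of a walk is reachable from the start. -/
lemma reachable_getVert {G : SimpleGraph V} {u v : V} (p : G.Walk u v) :
    ∀ i, G.Reachable u (p.getVert i) := by
  induction p with
  | nil => intro i; simpa [Walk.getVert] using Reachable.refl _
  | cons h p ih =>
    intro i
    cases i with
    | zero => simpa using Reachable.refl _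
    | succ i =>
      rw [Walk.getVert_cons_succ]
      exact (Reachable.symm ⟨Walk.cons h Walk.nil⟩).symm.trans (ih i)

/-- minimality step: if `s ∈ S` has no `Γ`-neighbour reachable (in `del Γ S`) from `c`,
then walks in `del Γ (S \ {s})` starting at a vertex reachable from `c` stay reachable
from `c` in `del Γ S`. -/
lemma walk_stays {Γ : SimpleGraph V} {S : Set V} {c s : V} (hc : c ∉ S)
    (hs : ∀ u, (del Γ S).Reachable c u → ¬Γ.Adj s u) :
    ∀ {u v : V}, (del Γ (S \ {s})).Walk u v →
      (del Γ S).Reachable c u → (del Γ S).Reachable c v := by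
  intro u v p
  induction p with
  | nil => exact id
  | cons h p ih =>
    rename_i w w' _
    intro hu
    refine ih ?_
    have hw' : w' ∉ S := by
      intro hw'S
      have : w' = s := by
        by_contra hne
        exact h.2.2 ⟨hw'S, hne⟩
      exact hs w hu (this ▸ h.1.symm)
    have hwS : w ∉ S := del_reachable_not_mem hu hc
    exact hu.trans ⟨Walk.cons ⟨h.1, hwS, hw'⟩ Walk.nil⟩


/-- A walk of length `n` from `x` to `y` given as a function, with interior in `A`. -/
def FnWalk (Γ : SimpleGraph V) (A : Set V) (x y : V) (n : ℕ) : Prop :=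
  ∃ g : ℕ → V, g 0 = x ∧ g n = y ∧ (∀ i < n, Γ.Adj (g i) (g (i + 1))) ∧
    ∀ i, 0 < i → i < n → g i ∈ A

lemma fnwalk_shortcut {Γ : SimpleGraph V} {A : Set V} {x y : V} {n : ℕ}
    {g : ℕ → V} (h0 : g 0 = x) (hn : g n = y)
    (hadj : ∀ i < n, Γ.Adj (g i) (g (i + 1)))
    (hA : ∀ i, 0 < i → i < n → g i ∈ A)
    {i d : ℕ} (hd : 1 ≤ d) (hdn : i + d ≤ n)
    (hjump : i + d < n → Γ.Adj (g i) (g (i + d + 1))) (hyjump : i + d = n → g i = y) :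
    FnWalk Γ A x y (n - d) := by
  refine ⟨fun k => if k ≤ i then g k else g (k + d), by simp [h0], ?_, ?_, ?_⟩
  · dsimp only
    by_cases h : n - d ≤ i
    · have hin : i + d = n := by omega
      simp only [if_pos h]
      have : n - d = i := by omega
      rw [this]
      exact hyjump hin
    · simp only [if_neg h]
      have : n - d + d = n := by omega
      rw [this, hn]
  · intro k hk
    dsimp only
    rcases lt_trichotomy k i with h | h | h
    · rw [if_pos (by omega), if_pos (by omega)]
      exact hadj k (by omega)
    · subst h
      rw [if_pos le_rfl, if_neg (by omega), show k + 1 + d = k + d + 1 by omega]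
      exact hjump (by omega)
    · rw [if_neg (by omega), if_neg (by omega), show k + 1 + d = k + d + 1 by omega]
      exact hadj (k + d) (by omega)
  · intro k hk1 hk2
    dsimp only
    by_cases h : k ≤ i
    · rw [if_pos h]
      exact hA k hk1 (by omega)
    · rw [if_neg h]
      exact hA (k + d) (by omega) (by omega)

/-- Existence of a minimal-length interior-in-`A` walk, which is automatically
injective and chord-free. -/
lemma exists_min_fnwalk {Γ : SimpleGraph V} {A : Set V} {x y : V}
    (hxy : x ≠ y) (hnadj : ¬Γ.Adj x y) (hex : ∃ n, FnWalk Γ A x y n) :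
    ∃ (n : ℕ) (g : ℕ → V), g 0 = x ∧ g n = y ∧ (∀ i < n, Γ.Adj (g i) (g (i + 1))) ∧
      (∀ i, 0 < i → i < n → g i ∈ A) ∧ 2 ≤ n ∧
      (∀ i j, i < j → j ≤ n → g i ≠ g j) ∧
      (∀ i j, i < j → j ≤ n → Γ.Adj (g i) (g j) → j = i + 1) := by
  classical
  have h2 : ∀ n, FnWalk Γ A x y n → 2 ≤ n := by
    intro n hw
    obtain ⟨g, h0, hn, hadj, _⟩ := hw
    by_contra hlt
    interval_cases n
    · exact hxy (h0 ▸ hn ▸ rfl)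
    · exact hnadj (h0 ▸ hn ▸ hadj 0 one_pos)
  obtain ⟨g, h0, hn, hadj, hA⟩ := Nat.find_spec hex
  have hmin : ∀ m, m < Nat.find hex → ¬FnWalk Γ A x y m := fun m hm => Nat.find_min hex hm
  set n := Nat.find hex with hndef
  refine ⟨n, g, h0, hn, hadj, hA, h2 n ⟨g, h0, hn, hadj, hA⟩, ?_, ?_⟩
  · intro i j hij hjn heq
    refine hmin (n - (j - i)) (by omega) ?_
    have := fnwalk_shortcut h0 hn hadj hA (i := i) (d := j - i) (by omega) (by omega)
      (fun h => ?_) (fun h => ?_)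
    · exact this
    · have hj : i + (j - i) = j := by omega
      rw [hj] at h ⊢
      exact heq ▸ hadj j h
    · have hj : i + (j - i) = j := by omega
      rw [hj] at h
      rw [heq, h, hn]
  · intro i j hij hjn hadjij
    by_contra hne
    have hij2 : i + 2 ≤ j := by omega
    refine hmin (n - (j - i - 1)) (by omega) ?_
    refine fnwalk_shortcut h0 hn hadj hA (i := i) (d := j - i - 1) (by omega) (by omega)
      (fun h => ?_) (fun h => absurd h (by omega))
    have hj : i + (j - i - 1) + 1 = j := by omega
    rw [hj]
    exact hadjij


lemma consec_val {n u v : ℕ} (hu : u < n) (h2 : 2 ≤ n) (h : (u + 1) % n = v) :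
    (n - u + v) % n = 1 := by
  rcases lt_or_ge (u + 1) n with h1 | h1
  · rw [Nat.mod_eq_of_lt h1] at h
    rw [show n - u + v = n + 1 by omega, Nat.add_mod_left, Nat.mod_eq_of_lt (by omega)]
  · have hun : u + 1 = n := by omega
    rw [hun, Nat.mod_self] at h
    rw [show n - u + v = 1 by omega, Nat.mod_eq_of_lt (by omega)]

lemma val_consec {n u v : ℕ} (hu : u < n) (hv : v < n) (h : (n - v + u) % n = 1) :
    u = (v + 1) % n := by
  rcases lt_or_ge (n - v + u) n with ht | ht
  · rw [Nat.mod_eq_of_lt ht] at h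
    have : u = 0 ∧ v = n - 1 := by omega
    rw [this.1, this.2, show n - 1 + 1 = n by omega, Nat.mod_self]
  · have he : (n - v + u) % n = n - v + u - n := by
      rw [Nat.mod_eq_sub_mod ht, Nat.mod_eq_of_lt (by omega)]
    rw [he] at h
    rw [Nat.mod_eq_of_lt (by omega)]
    omega

lemma no_double_path {Γ : SimpleGraph V} {A B : Set V} {x y : V}
    (hchordal : ∀ n : ℕ, 4 ≤ n → IsEmpty (SimpleGraph.cycleGraph n ↪g Γ))
    (hxy : x ≠ y) (hnadj : ¬Γ.Adj x y)
    (hxA : x ∉ A) (hyA : y ∉ A) (hxB : x ∉ B) (hyB : y ∉ B)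
    (hABdisj : ∀ u ∈ A, u ∉ B)
    (hABnadj : ∀ u ∈ A, ∀ v ∈ B, ¬Γ.Adj u v)
    (hexA : ∃ n, FnWalk Γ A x y n) (hexB : ∃ n, FnWalk Γ B x y n) : False := by
  obtain ⟨nA, gA, hA0, hAn, hAadj, hAmem, hA2, hAinj, hAchord⟩ :=
    exists_min_fnwalk hxy hnadj hexA
  obtain ⟨nB, gB, hB0, hBn, hBadj, hBmem, hB2, hBinj, hBchord⟩ :=
    exists_min_fnwalk hxy hnadj hexB
  set n := nA + nB with hndef
  have hn4 : 4 ≤ n := by omega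
  set F : ℕ → V := fun k => if k ≤ nA then gA k else gB (n - k) with hF
  have hFlow : ∀ k, k ≤ nA → F k = gA k := fun k hk => by simp [hF, hk]
  have hFhigh : ∀ k, nA < k → F k = gB (n - k) := fun k hk => by
    simp [hF, Nat.not_le.mpr hk]
  -- the interior of the B-path lies in B
  have hBint : ∀ m, 0 < m → m < nB → gB m ∈ B := hBmem
  -- adjacency around the cycle
  have hFadj : ∀ k, k < n → Γ.Adj (F k) (F ((k + 1) % n)) := by
    intro k hk
    rcases eq_or_lt_of_le (Nat.succ_le_of_lt hk) with hk1 | hk1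
    · -- k + 1 = n
      have hk1 : k + 1 = n := hk1
      rw [hk1, Nat.mod_self, hFlow 0 (by omega), hFhigh k (by omega),
        show n - k = 1 by omega, hA0, ← hB0]
      exact (hBadj 0 (by omega)).symm
    · rw [Nat.mod_eq_of_lt hk1]
      rcases lt_trichotomy k nA with h | h | h
      · rw [hFlow k (by omega), hFlow (k + 1) (by omega)]
        exact hAadj k h
      · subst h
        rw [hFlow k le_rfl, hFhigh (k + 1) (by omega), hAn,
          show n - (k + 1) = nB - 1 by omega, ← hBn]
        have := hBadj (nB - 1) (by omega)
        rw [show nB - 1 + 1 = nB by omega] at this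
        exact this.symm
      · rw [hFhigh k h, hFhigh (k + 1) (by omega)]
        have := hBadj (n - k - 1) (by omega)
        rw [show n - k - 1 + 1 = n - k by omega] at this
        rw [show n - (k + 1) = n - k - 1 by omega]
        exact this.symm
  -- injectivity helpers
  have hAinj' : ∀ i j, i ≤ nA → j ≤ nA → gA i = gA j → i = j := by
    intro i j hi hj he
    rcases lt_trichotomy i j with h | h | h
    · exact absurd he (hAinj i j h hj)
    · exact h
    · exact absurd he.symm (hAinj j i h hi)
  have hBinj' : ∀ i j, i ≤ nB → j ≤ nB → gB i = gB j → i = j := by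
    intro i j hi hj he
    rcases lt_trichotomy i j with h | h | h
    · exact absurd he (hBinj i j h hj)
    · exact h
    · exact absurd he.symm (hBinj j i h hi)
  have cross : ∀ u v, u ≤ nA → nA < v → v < n → F u ≠ F v := by
    intro u v hu hv1 hv2 he
    rw [hFlow u hu, hFhigh v hv1] at he
    have hmB : gB (n - v) ∈ B := hBint (n - v) (by omega) (by omega)
    rcases Nat.eq_or_lt_of_le (Nat.zero_le u) with h0 | h0
    · rw [← h0, hA0] at he
      exact hxB (he ▸ hmB)
    · rcases eq_or_lt_of_le hu with hna | hna
      · rw [hna, hAn] at he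
        exact hyB (he ▸ hmB)
      · exact hABdisj _ (hAmem u h0 hna) (he ▸ hmB)
  have hFinj : ∀ u v, u < n → v < n → F u = F v → u = v := by
    intro u v hu hv he
    rcases le_or_gt u nA with h1 | h1 <;> rcases le_or_gt v nA with h2 | h2
    · rw [hFlow u h1, hFlow v h2] at he
      exact hAinj' u v h1 h2 he
    · exact absurd he (cross u v h1 h2 hv)
    · exact absurd he.symm (cross v u h2 h1 hu)
    · rw [hFhigh u h1, hFhigh v h2] at he
      have := hBinj' (n - u) (n - v) (by omega) (by omega) he
      omega
  -- no chords: adjacency forces consecutive positions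
  have crossAdj : ∀ u v, u ≤ nA → nA < v → v < n → Γ.Adj (F u) (F v) →
      (u = nA ∧ v = nA + 1) ∨ (u = 0 ∧ v = n - 1) := by
    intro u v hu hv1 hv2 hadj
    rw [hFlow u hu, hFhigh v hv1] at hadj
    have hm1 : 0 < n - v := by omega
    have hm2 : n - v < nB := by omega
    rcases Nat.eq_or_lt_of_le (Nat.zero_le u) with h0 | h0
    · right
      rw [← h0, hA0, ← hB0] at hadj
      have := hBchord 0 (n - v) hm1 (by omega) hadj
      omega
    · rcases eq_or_lt_of_le hu with hna | hna
      · left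
        rw [hna, hAn, ← hBn] at hadj
        have := hBchord (n - v) nB hm2 le_rfl hadj.symm
        omega
      · exact absurd hadj (hABnadj _ (hAmem u h0 hna) _ (hBint (n - v) hm1 hm2))
  have hback : ∀ u v, u < n → v < n → Γ.Adj (F u) (F v) →
      (u + 1) % n = v ∨ (v + 1) % n = u := by
    intro u v hu hv hadj
    rcases le_or_gt u nA with h1 | h1 <;> rcases le_or_gt v nA with h2 | h2
    · rw [hFlow u h1, hFlow v h2] at hadj
      rcases lt_trichotomy u v with h | h | h
      · left
        have := hAchord u v h h2 hadj
        rw [this] at *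
        exact Nat.mod_eq_of_lt (by omega)
      · exact absurd (h ▸ hadj) (Γ.irrefl)
      · right
        have := hAchord v u h h1 hadj.symm
        rw [this] at *
        exact Nat.mod_eq_of_lt (by omega)
    · rcases crossAdj u v h1 h2 hv hadj with ⟨e1, e2⟩ | ⟨e1, e2⟩
      · left
        rw [e1, e2]
        exact Nat.mod_eq_of_lt (by omega)
      · right
        rw [e1, e2, show n - 1 + 1 = n by omega, Nat.mod_self]
    · rcases crossAdj v u h2 h1 hu hadj.symm with ⟨e1, e2⟩ | ⟨e1, e2⟩
      · right
        rw [e1, e2]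
        exact Nat.mod_eq_of_lt (by omega)
      · left
        rw [e1, e2, show n - 1 + 1 = n by omega, Nat.mod_self]
    · rw [hFhigh u h1, hFhigh v h2] at hadj
      have hne : n - u ≠ n - v := by
        intro he
        exact Γ.irrefl (show u = v by omega ▸ hadj)
      rcases lt_trichotomy (n - u) (n - v) with h | h | h
      · right
        have := hBchord (n - u) (n - v) h (by omega) hadj
        have hvu : u = v + 1 := by omega
        rw [hvu]
        exact Nat.mod_eq_of_lt (by omega)
      · exact absurd h hne
      · left
        have := hBchord (n - v) (n - u) h (by omega) hadj.symm
        have hvu : v = u + 1 := by omega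
        rw [hvu]
        exact Nat.mod_eq_of_lt (by omega)
  -- build the embedding
  refine (hchordal n hn4).false ?_
  refine ⟨⟨fun k => F k.val, ?_⟩, ?_⟩
  · intro u v he
    exact Fin.ext (hFinj u.val v.val u.isLt v.isLt he)
  · intro u v
    show Γ.Adj (F u.val) (F v.val) ↔ _
    rw [SimpleGraph.cycleGraph_adj']
    constructor
    · intro h
      rcases hback u.val v.val u.isLt v.isLt h with hc | hc
      · right
        rw [Fin.sub_def]
        simpa using consec_val u.isLt (by omega) hc
      · left
        rw [Fin.sub_def]
        simpa using consec_val v.isLt (by omega) hc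
    · intro h
      rcases h with h | h
      · rw [Fin.sub_def] at h
        have := val_consec u.isLt v.isLt (by simpa using h)
        have h2 := hFadj v.val v.isLt
        rw [← this] at h2
        exact h2.symm
      · rw [Fin.sub_def] at h
        have := val_consec v.isLt u.isLt (by simpa using h)
        have h2 := hFadj u.val u.isLt
        rw [← this] at h2
        exact h2


lemma exists_fnwalk {Γ : SimpleGraph V} {S C : Set V} {x y u w : V}
    (p : (del Γ S).Walk u w) (hC : ∀ i, p.getVert i ∈ C)
    (hxu : Γ.Adj x u) (hyw : Γ.Adj y w) : ∃ n, FnWalk Γ C x y n := by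
  refine ⟨p.length + 2, fun i => if i = 0 then x else if i ≤ p.length + 1 then
    p.getVert (i - 1) else y, by simp, by simp, ?_, ?_⟩
  · intro i hi
    dsimp only
    rcases Nat.eq_zero_or_pos i with h0 | h0
    · subst h0
      rw [if_pos rfl, if_neg (by omega), if_pos (by omega)]
      simpa using hxu
    · rcases eq_or_lt_of_le (show i ≤ p.length + 1 by omega) with h1 | h1
      · rw [if_neg (by omega), if_pos (by omega), if_neg (by omega), if_neg (by omega),
          h1, show p.length + 1 - 1 = p.length by omega, p.getVert_length]
        exact hyw.symm
      · rw [if_neg (by omega), if_pos (by omega), if_neg (by omega), if_pos (by omega),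
          show i + 1 - 1 = i - 1 + 1 by omega]
        exact (p.adj_getVert_succ (by omega)).1
  · intro i h1 h2
    dsimp only
    rw [if_neg (by omega), if_pos (by omega)]
    exact hC _

end DiracAux

open DiracAux

/-- Dirac's clique separator theorem.  Let `Γ` be a finite chordal graph (no induced
cycle of length at least `4`) that is not complete.  Then `V(Γ) = V1 ∪ V2` where `V1`
and `V2` are proper subsets, the induced subgraph on `V1 ∩ V2` is complete, and no
vertex of `V1 \ V2` is adjacent to a vertex of `V2 \ V1`. -/
theorem chordal_clique_separator
    {V : Type*} [Finite V] (Γ : SimpleGraph V)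
    (hchordal : ∀ n : ℕ, 4 ≤ n → IsEmpty (SimpleGraph.cycleGraph n ↪g Γ))
    (hnotcomplete : Γ ≠ ⊤) :
    ∃ V1 V2 : Set V, V1 ∪ V2 = Set.univ ∧ V1 ≠ Set.univ ∧ V2 ≠ Set.univ ∧
      Γ.IsClique (V1 ∩ V2) ∧
      ∀ a ∈ V1 \ V2, ∀ b ∈ V2 \ V1, ¬ Γ.Adj a b := by
  classical
  obtain ⟨a, b, hab, hnadjab⟩ : ∃ a b, a ≠ b ∧ ¬Γ.Adj a b := by
    by_contra h
    push_neg at h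
    exact hnotcomplete (by
      ext u v
      simp only [SimpleGraph.top_adj]
      exact ⟨Γ.ne_of_adj, h u v⟩)
  -- separators exist
  have hP : ∃ m, ∃ S : Set V,
      (a ∉ S ∧ b ∉ S ∧ ¬(del Γ S).Reachable a b) ∧ S.ncard = m := by
    refine ⟨_, ({a, b} : Set V)ᶜ, ⟨by simp, by simp, ?_⟩, rfl⟩
    rintro ⟨p⟩
    cases p with
    | nil => exact hab rfl
    | cons h q =>
      have hw := h.2.2
      simp only [Set.mem_compl_iff, Set.mem_insert_iff, Set.mem_singleton_iff,
        not_not] at hw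
      rcases hw with h' | h'
      · exact absurd h' (Γ.ne_of_adj h.1).symm
      · exact hnadjab (h' ▸ h.1)
  obtain ⟨S, ⟨haS, hbS, hreach⟩, hcard⟩ := Nat.find_spec hP
  have hmin := fun m (hm : m < Nat.find hP) => Nat.find_min hP hm
  set CA : Set V := {v | (del Γ S).Reachable a v} with hCAdef
  set CB : Set V := {v | (del Γ S).Reachable b v} with hCBdef
  have hCAS : ∀ v ∈ CA, v ∉ S := fun v hv => del_reachable_not_mem hv haS
  have hCBS : ∀ v ∈ CB, v ∉ S := fun v hv => del_reachable_not_mem hv hbS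
  have hCACB : ∀ v ∈ CA, v ∉ CB := fun v hv hv' => hreach (hv.trans hv'.symm)
  have haCA : a ∈ CA := SimpleGraph.Reachable.refl a
  have hbCB : b ∈ CB := SimpleGraph.Reachable.refl b
  have hbCA : b ∉ CA := hreach
  have hnoedge : ∀ u ∈ CA, ∀ v, v ∉ S → Γ.Adj u v → v ∈ CA := by
    intro u hu v hv hadj
    exact hu.trans ⟨SimpleGraph.Walk.cons ⟨hadj, hCAS u hu, hv⟩ SimpleGraph.Walk.nil⟩
  -- every vertex of S has neighbours in both components
  have hnbr : ∀ s ∈ S, (∃ u ∈ CA, Γ.Adj s u) ∧ (∃ u ∈ CB, Γ.Adj s u) := by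
    intro s hs
    have hsmall : (S \ {s}).ncard < Nat.find hP := by
      rw [← hcard]
      exact Set.ncard_diff_singleton_lt_of_mem hs (Set.toFinite S)
    constructor
    · by_contra hc
      push_neg at hc
      have hsA : ∀ u, (del Γ S).Reachable a u → ¬Γ.Adj s u := fun u hu => hc u hu
      refine hmin _ hsmall ⟨S \ {s}, ⟨fun h => haS h.1, fun h => hbS h.1, ?_⟩, rfl⟩
      rintro ⟨p⟩
      exact hreach (walk_stays haS hsA p (SimpleGraph.Reachable.refl a))
    · by_contra hc
      push_neg at hc
      have hsB : ∀ u, (del Γ S).Reachable b u → ¬Γ.Adj s u := fun u hu => hc u hu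
      refine hmin _ hsmall ⟨S \ {s}, ⟨fun h => haS h.1, fun h => hbS h.1, ?_⟩, rfl⟩
      rintro ⟨p⟩
      exact hreach (walk_stays hbS hsB p.reverse (SimpleGraph.Reachable.refl b)).symm
  -- S is a clique
  have hclique : Γ.IsClique S := by
    intro x hx y hy hne
    by_contra hnadj
    obtain ⟨⟨uA, huA, hxuA⟩, ⟨uB, huB, hxuB⟩⟩ := hnbr x hx
    obtain ⟨⟨wA, hwA, hywA⟩, ⟨wB, hwB, hywB⟩⟩ := hnbr y hy
    obtain ⟨pA⟩ : (del Γ S).Reachable uA wA := huA.symm.trans hwA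
    obtain ⟨pB⟩ : (del Γ S).Reachable uB wB := huB.symm.trans hwB
    have hexA : ∃ n, FnWalk Γ CA x y n :=
      exists_fnwalk pA (fun i => huA.trans (reachable_getVert pA i)) hxuA hywA
    have hexB : ∃ n, FnWalk Γ CB x y n :=
      exists_fnwalk pB (fun i => huB.trans (reachable_getVert pB i)) hxuB hywB
    refine no_double_path hchordal hne hnadj ?_ ?_ ?_ ?_ hCACB ?_ hexA hexB
    · exact fun h => hCAS x h hx
    · exact fun h => hCAS y h hy
    · exact fun h => hCBS x h hx
    · exact fun h => hCBS y h hy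
    · intro u hu v hv hadj
      exact hCACB v (hnoedge u hu v (hCBS v hv) hadj) hv
  refine ⟨CA ∪ S, CAᶜ, ?_, ?_, ?_, ?_, ?_⟩
  · ext v
    simp only [Set.mem_union, Set.mem_compl_iff, Set.mem_univ, iff_true]
    tauto
  · intro h
    have : b ∈ CA ∪ S := h ▸ Set.mem_univ b
    rcases this with h' | h'
    · exact hbCA h'
    · exact hbS h'
  · intro h
    have : a ∈ (CAᶜ : Set V) := h ▸ Set.mem_univ a
    exact this haCA
  · refine hclique.subset ?_
    rintro v ⟨hv1, hv2⟩
    rcases hv1 with h' | h'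
    · exact absurd h' hv2
    · exact h'
  · rintro u ⟨hu1, hu2⟩ v ⟨hv1, hv2⟩ hadj
    simp only [Set.mem_compl_iff, not_not] at hu2
    have hvS : v ∉ S := fun h => hv2 (Set.mem_union_right _ h)
    exact hv1 (hnoedge u hu2 v hvS hadj)
end

section
/- Let Γ be a finite simple graph, t a vertex of Γ, and Γ'' the double of Γ ∖ st(t) along the link of t (two copies of Γ ∖ st(t) glued along the induced subgraph on lk(t)). If 𝒢 = {G_v : v ∈ V(Γ)} is a collection of nontrivial groups and ρ: V(Γ'') → V(Γ) ∖ {t} is the natural projection, then GP(Γ'', {G_{ρ(u)}}) embeds into GP(Γ, 𝒢). -/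
open Monoid
open scoped commutatorElement

variable {V : Type*} (Γ : SimpleGraph V) (G : V → Type*) [∀ v, Group (G v)]

/-- The defining relators of the graph product: commutators of elements of
vertex groups attached to adjacent vertices. -/
def graphProductRels : Set (Monoid.CoprodI G) :=
  {x | ∃ (u v : V) (g : G u) (h : G v), Γ.Adj u v ∧
        x = ⁅Monoid.CoprodI.of g, Monoid.CoprodI.of h⁆}

/-- The graph product of the groups `G v` over the graph `Γ`. -/
def GraphProduct : Type _ :=
  Monoid.CoprodI G ⧸ Subgroup.normalClosure (graphProductRels Γ G)

instance : Group (GraphProduct Γ G) :=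
  QuotientGroup.Quotient.group _

/-- The canonical map from a vertex group into the graph product. -/
def GraphProduct.of (v : V) : G v →* GraphProduct Γ G :=
  (QuotientGroup.mk' _).comp Monoid.CoprodI.of

/-- The natural projection from the graph product onto the direct product of the
vertex groups. -/
def GraphProduct.proj [DecidableEq V] : GraphProduct Γ G →* ((v : V) → G v) :=
  QuotientGroup.lift _ (Monoid.CoprodI.lift fun v => MonoidHom.mulSingle G v)
    (Subgroup.normalClosure_le_normal <| by
      rintro x ⟨u, v, g, h, hadj, rfl⟩
      have huv : u ≠ v := hadj.ne
      simp only [SetLike.mem_coe, MonoidHom.mem_ker, map_commutatorElement,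
        Monoid.CoprodI.lift_of]
      exact commutatorElement_eq_one_iff_commute.mpr
        (Pi.mulSingle_commute huv g h))

/-- The graph product kernel: the kernel of the natural surjection onto the
direct product of the vertex groups. -/
def GraphProductKernel [DecidableEq V] : Subgroup (GraphProduct Γ G) :=
  MonoidHom.ker (GraphProduct.proj Γ G)

/-- The double of `Γ ∖ st(t₀)` along the link of `t₀`: two copies of the induced
subgraph on `V ∖ {t₀}` glued along the induced subgraph on the link of `t₀`.
Vertices of the link are represented by pairs with second coordinate `false`. -/
def doubleAlongLink {V : Type*} (Γ : SimpleGraph V) (t₀ : V) :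
    SimpleGraph {p : V × Bool // p.1 ≠ t₀ ∧ (p.2 = false ∨ ¬ Γ.Adj t₀ p.1)} where
  Adj p q := Γ.Adj p.1.1 q.1.1 ∧ (p.1.2 = q.1.2 ∨ Γ.Adj t₀ p.1.1 ∨ Γ.Adj t₀ q.1.1)
  symm := by
    constructor
    rintro p q ⟨h1, h2⟩
    exact ⟨h1.symm, by tauto⟩
  loopless := by
    constructor
    rintro p ⟨h, -⟩
    exact Γ.loopless.irrefl _ h

section LiftSec

open Monoid

variable {V : Type*} (Γ : SimpleGraph V) (G : V → Type*) [∀ v, Group (G v)]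
variable {H : Type*} [Group H]

/-- Universal property of the graph product. -/
def GraphProduct.lift (f : ∀ v, G v →* H)
    (hf : ∀ ⦃u v : V⦄, Γ.Adj u v → ∀ (g : G u) (h : G v), Commute (f u g) (f v h)) :
    GraphProduct Γ G →* H :=
  QuotientGroup.lift _ (Monoid.CoprodI.lift f)
    (Subgroup.normalClosure_le_normal <| by
      rintro x ⟨u, v, g, h, hadj, rfl⟩
      simp only [SetLike.mem_coe, MonoidHom.mem_ker, map_commutatorElement,
        Monoid.CoprodI.lift_of]
      exact commutatorElement_eq_one_iff_commute.mpr (hf hadj g h))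

@[simp] lemma GraphProduct.lift_of (f : ∀ v, G v →* H) (hf) (v : V) (g : G v) :
    GraphProduct.lift Γ G f hf (GraphProduct.of Γ G v g) = f v g := rfl

lemma GraphProduct.of_commute {u v : V} (h : Γ.Adj u v) (g : G u) (g' : G v) :
    Commute (GraphProduct.of Γ G u g) (GraphProduct.of Γ G v g') := by
  rw [← commutatorElement_eq_one_iff_commute]
  have hmem : ⁅Monoid.CoprodI.of g, Monoid.CoprodI.of g'⁆ ∈
      Subgroup.normalClosure (graphProductRels Γ G) :=
    Subgroup.subset_normalClosure ⟨u, v, g, g', h, rfl⟩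
  have h1 : (QuotientGroup.mk' (Subgroup.normalClosure (graphProductRels Γ G)))
      ⁅Monoid.CoprodI.of g, Monoid.CoprodI.of g'⁆ = 1 :=
    (QuotientGroup.eq_one_iff _).mpr hmem
  rw [map_commutatorElement] at h1
  exact h1

lemma GraphProduct.hom_ext {f g : GraphProduct Γ G →* H}
    (h : ∀ (v : V) (x : G v), f (GraphProduct.of Γ G v x) = g (GraphProduct.of Γ G v x)) :
    f = g := by
  apply QuotientGroup.monoidHom_ext
  apply Monoid.CoprodI.ext_hom
  intro v
  ext x
  exact h v x

lemma GraphProduct.of_congr {W : Type*} (Γ' : SimpleGraph W) (F : W → Type*)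
    [∀ w, Group (F w)] {w w' : W} (h : w = w') {g : F w} {g' : F w'} (hg : HEq g g') :
    GraphProduct.of Γ' F w g = GraphProduct.of Γ' F w' g' := by
  subst h; rw [eq_of_heq hg]

end LiftSec

section MainSec

open Monoid SemidirectProduct

open scoped Classical

set_option maxHeartbeats 1000000

variable {V : Type*} (Γ : SimpleGraph V) (G : V → Type*) [∀ v, Group (G v)] (t₀ : V)

/-- Vertices of the `G t₀`-indexed multiple of `Γ ∖ st(t₀)` along the link of `t₀`. -/
abbrev multiVert : Type _ := {p : V × G t₀ // p.1 ≠ t₀ ∧ (p.2 = 1 ∨ ¬ Γ.Adj t₀ p.1)}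

/-- The `G t₀`-indexed multiple of `Γ ∖ st(t₀)` along the link of `t₀`. -/
def multiGraph : SimpleGraph (multiVert Γ G t₀) where
  Adj p q := Γ.Adj p.1.1 q.1.1 ∧ (p.1.2 = q.1.2 ∨ Γ.Adj t₀ p.1.1 ∨ Γ.Adj t₀ q.1.1)
  symm := by
    constructor
    rintro p q ⟨h1, h2⟩
    exact ⟨h1.symm, by tauto⟩
  loopless := by
    constructor
    rintro p ⟨h, -⟩
    exact Γ.loopless.irrefl _ h

/-- The shift of copies by `k : G t₀` on vertices of the multiple graph. -/
noncomputable def shiftVert (k : G t₀) (p : multiVert Γ G t₀) : multiVert Γ G t₀ :=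
  ⟨(p.1.1, if Γ.Adj t₀ p.1.1 then p.1.2 else k * p.1.2), p.2.1, by
    by_cases hA : Γ.Adj t₀ p.1.1
    · rw [if_pos hA]
      exact Or.inl (p.2.2.resolve_right (fun h => h hA))
    · exact Or.inr hA⟩

lemma shiftVert_adj {k : G t₀} {p q : multiVert Γ G t₀}
    (h : (multiGraph Γ G t₀).Adj p q) :
    (multiGraph Γ G t₀).Adj (shiftVert Γ G t₀ k p) (shiftVert Γ G t₀ k q) := by
  obtain ⟨h1, h2⟩ := h
  refine ⟨h1, ?_⟩
  show (if Γ.Adj t₀ p.1.1 then p.1.2 else k * p.1.2) =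
      (if Γ.Adj t₀ q.1.1 then q.1.2 else k * q.1.2) ∨ Γ.Adj t₀ p.1.1 ∨ Γ.Adj t₀ q.1.1
  by_cases hp : Γ.Adj t₀ p.1.1
  · exact Or.inr (Or.inl hp)
  by_cases hq : Γ.Adj t₀ q.1.1
  · exact Or.inr (Or.inr hq)
  rcases h2 with h2 | h2 | h2
  · exact Or.inl (by rw [if_neg hp, if_neg hq, h2])
  · exact absurd h2 hp
  · exact absurd h2 hq

/-- Shifting copies as an endomorphism of the graph product of the multiple. -/
noncomputable def shiftHom (k : G t₀) :
    GraphProduct (multiGraph Γ G t₀) (fun p => G p.1.1) →*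
      GraphProduct (multiGraph Γ G t₀) (fun p => G p.1.1) :=
  GraphProduct.lift (multiGraph Γ G t₀) (fun p => G p.1.1)
    (fun p => GraphProduct.of (multiGraph Γ G t₀) (fun p => G p.1.1) (shiftVert Γ G t₀ k p))
    (fun _ _ h g g' => GraphProduct.of_commute (multiGraph Γ G t₀) (fun p => G p.1.1)
      (shiftVert_adj Γ G t₀ h) g g')

@[simp] lemma shiftHom_of (k : G t₀) (p : multiVert Γ G t₀) (g : G p.1.1) :
    shiftHom Γ G t₀ k (GraphProduct.of _ _ p g) =
      GraphProduct.of _ _ (shiftVert Γ G t₀ k p) g := rfl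

lemma shiftVert_mul (k k' : G t₀) (p : multiVert Γ G t₀) :
    shiftVert Γ G t₀ k (shiftVert Γ G t₀ k' p) = shiftVert Γ G t₀ (k * k') p := by
  refine Subtype.ext (Prod.ext rfl ?_)
  by_cases hA : Γ.Adj t₀ p.1.1 <;> simp [shiftVert, hA, mul_assoc]

lemma shiftVert_one (p : multiVert Γ G t₀) : shiftVert Γ G t₀ 1 p = p := by
  refine Subtype.ext (Prod.ext rfl ?_)
  by_cases hA : Γ.Adj t₀ p.1.1 <;> simp [shiftVert, hA]

lemma shiftHom_shiftHom (k k' : G t₀) (x) :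
    shiftHom Γ G t₀ k (shiftHom Γ G t₀ k' x) = shiftHom Γ G t₀ (k * k') x := by
  have h : (shiftHom Γ G t₀ k).comp (shiftHom Γ G t₀ k') = shiftHom Γ G t₀ (k * k') :=
    GraphProduct.hom_ext _ _ (fun p g => by
      simp only [MonoidHom.comp_apply, shiftHom_of]
      exact GraphProduct.of_congr _ _ (shiftVert_mul Γ G t₀ k k' p) HEq.rfl)
  exact DFunLike.congr_fun h x

lemma shiftHom_one (x) : shiftHom Γ G t₀ 1 x = x := by
  have h : shiftHom Γ G t₀ 1 = MonoidHom.id _ :=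
    GraphProduct.hom_ext _ _ (fun p g => by
      simp only [shiftHom_of, MonoidHom.id_apply]
      exact GraphProduct.of_congr _ _ (shiftVert_one Γ G t₀ p) HEq.rfl)
  rw [h]; rfl

/-- Shifting copies as a homomorphism into the automorphism group. -/
noncomputable def shiftAut :
    G t₀ →* MulAut (GraphProduct (multiGraph Γ G t₀) (fun p => G p.1.1)) where
  toFun k :=
    { toFun := shiftHom Γ G t₀ k
      invFun := shiftHom Γ G t₀ k⁻¹
      left_inv := fun x => by rw [shiftHom_shiftHom, inv_mul_cancel, shiftHom_one]
      right_inv := fun x => by rw [shiftHom_shiftHom, mul_inv_cancel, shiftHom_one]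
      map_mul' := map_mul _ }
  map_one' := MulEquiv.ext (fun x => shiftHom_one Γ G t₀ x)
  map_mul' k k' := MulEquiv.ext (fun x => (shiftHom_shiftHom Γ G t₀ k k' x).symm)

@[simp] lemma shiftAut_apply (k : G t₀) (x) :
    shiftAut Γ G t₀ k x = shiftHom Γ G t₀ k x := rfl

/-- The vertex-group data of the homomorphism from `GP(Γ)` to the semidirect product. -/
noncomputable def bigMap (v : V) :
    G v →* GraphProduct (multiGraph Γ G t₀) (fun p => G p.1.1) ⋊[shiftAut Γ G t₀] G t₀ :=
  if h : v = t₀ then (by subst h; exact inr) else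
    inl.comp (GraphProduct.of (multiGraph Γ G t₀) (fun p => G p.1.1)
      (⟨(v, 1), h, Or.inl rfl⟩ : multiVert Γ G t₀))

lemma bigMap_t : bigMap Γ G t₀ t₀ = inr := by
  simp [bigMap]

lemma bigMap_ne {v : V} (h : v ≠ t₀) :
    bigMap Γ G t₀ v = inl.comp (GraphProduct.of (multiGraph Γ G t₀) (fun p => G p.1.1)
      (⟨(v, 1), h, Or.inl rfl⟩ : multiVert Γ G t₀)) := by
  simp [bigMap, h]

lemma commute_inr_inl {v : V} (hadj : Γ.Adj t₀ v) (g : G t₀) (x : G v) :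
    Commute ((inr : G t₀ →* GraphProduct (multiGraph Γ G t₀) (fun p => G p.1.1)
        ⋊[shiftAut Γ G t₀] G t₀) g)
      (inl (GraphProduct.of (multiGraph Γ G t₀) (fun p => G p.1.1)
        (⟨(v, 1), hadj.ne', Or.inl rfl⟩ : multiVert Γ G t₀) x)) := by
  set Y := GraphProduct.of (multiGraph Γ G t₀) (fun p => G p.1.1)
    (⟨(v, 1), hadj.ne', Or.inl rfl⟩ : multiVert Γ G t₀) x with hY
  have hfix : shiftVert Γ G t₀ g ⟨(v, 1), hadj.ne', Or.inl rfl⟩ =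
      ⟨(v, 1), hadj.ne', Or.inl rfl⟩ := by
    refine Subtype.ext (Prod.ext rfl ?_)
    show (if Γ.Adj t₀ v then (1 : G t₀) else g * 1) = 1
    rw [if_pos hadj]
  have key : (inr g : GraphProduct (multiGraph Γ G t₀) (fun p => G p.1.1)
      ⋊[shiftAut Γ G t₀] G t₀) * inl Y * inr g⁻¹ = inl Y := by
    rw [← inl_aut (φ := shiftAut Γ G t₀) g Y, hY, shiftAut_apply, shiftHom_of]
    exact congrArg inl (GraphProduct.of_congr (multiGraph Γ G t₀) (fun p => G p.1.1) hfix HEq.rfl)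
  have key2 := congrArg (fun z => z * inr g) key
  rw [map_inv, inv_mul_cancel_right] at key2
  exact key2

/-- The homomorphism from `GP(Γ)` to the semidirect product of the multiple with `G t₀`. -/
noncomputable def bigHom :
    GraphProduct Γ G →*
      GraphProduct (multiGraph Γ G t₀) (fun p => G p.1.1) ⋊[shiftAut Γ G t₀] G t₀ :=
  GraphProduct.lift _ _ (bigMap Γ G t₀) (by
    intro u v hadj g g'
    by_cases hu : u = t₀
    · subst hu
      have hv : v ≠ u := hadj.ne'
      rw [bigMap_t Γ G u, bigMap_ne Γ G u hv]
      exact commute_inr_inl Γ G u hadj g g'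
    · by_cases hv : v = t₀
      · subst hv
        rw [bigMap_t Γ G v, bigMap_ne Γ G v hu]
        exact (commute_inr_inl Γ G v hadj.symm g' g).symm
      · rw [bigMap_ne Γ G t₀ hu, bigMap_ne Γ G t₀ hv]
        exact (GraphProduct.of_commute (multiGraph Γ G t₀) (fun p => G p.1.1)
          (⟨hadj, Or.inl rfl⟩ : (multiGraph Γ G t₀).Adj ⟨(u, 1), hu, Or.inl rfl⟩
            ⟨(v, 1), hv, Or.inl rfl⟩) g g').map inl)

variable (a : G t₀)

/-- The embedding of the vertices of the double into the vertices of the multiple: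
the `false` copy goes to the copy indexed by `1` and the `true` copy to the copy
indexed by `a`. -/
def dmap (p : {p : V × Bool // p.1 ≠ t₀ ∧ (p.2 = false ∨ ¬ Γ.Adj t₀ p.1)}) :
    multiVert Γ G t₀ :=
  ⟨(p.1.1, if p.1.2 = true then a else 1), p.2.1, by
    by_cases hb : p.1.2 = true
    · rw [if_pos hb]
      exact Or.inr (p.2.2.resolve_left (by rw [hb]; simp))
    · rw [if_neg hb]
      exact Or.inl rfl⟩

lemma dmap_adj {p q} (h : (doubleAlongLink Γ t₀).Adj p q) :
    (multiGraph Γ G t₀).Adj (dmap Γ G t₀ a p) (dmap Γ G t₀ a q) := by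
  obtain ⟨h1, h2⟩ := h
  refine ⟨h1, ?_⟩
  rcases h2 with h2 | h2 | h2
  · exact Or.inl (by simp only [dmap]; rw [h2])
  · exact Or.inr (Or.inl h2)
  · exact Or.inr (Or.inr h2)

/-- The embedding of the graph product of the double into that of the multiple. -/
noncomputable def iotaHom :
    GraphProduct (doubleAlongLink Γ t₀) (fun p => G p.1.1) →*
      GraphProduct (multiGraph Γ G t₀) (fun p => G p.1.1) :=
  GraphProduct.lift (doubleAlongLink Γ t₀) (fun p => G p.1.1)
    (fun p => GraphProduct.of (multiGraph Γ G t₀) (fun p => G p.1.1) (dmap Γ G t₀ a p))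
    (fun _ _ h g g' => GraphProduct.of_commute (multiGraph Γ G t₀) (fun p => G p.1.1)
      (dmap_adj Γ G t₀ a h) g g')

/-- The retraction data: kill all copies other than those indexed by `1` and `a`. -/
noncomputable def rmap (w : multiVert Γ G t₀) :
    G w.1.1 →* GraphProduct (doubleAlongLink Γ t₀) (fun p => G p.1.1) :=
  if h1 : w.1.2 = 1 then GraphProduct.of (doubleAlongLink Γ t₀) (fun p => G p.1.1)
    ⟨(w.1.1, false), w.2.1, Or.inl rfl⟩
  else if h2 : w.1.2 = a then
    GraphProduct.of (doubleAlongLink Γ t₀) (fun p => G p.1.1)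
      ⟨(w.1.1, true), w.2.1, Or.inr (w.2.2.resolve_left h1)⟩
  else 1

/-- The retraction from the graph product of the multiple onto that of the double. -/
noncomputable def rHom :
    GraphProduct (multiGraph Γ G t₀) (fun p => G p.1.1) →*
      GraphProduct (doubleAlongLink Γ t₀) (fun p => G p.1.1) :=
  GraphProduct.lift _ _ (rmap Γ G t₀ a) (by
    intro w w' hadj g g'
    obtain ⟨hA, hside⟩ := hadj
    unfold rmap
    by_cases h1 : w.1.2 = 1 <;> by_cases h1' : w'.1.2 = 1
    · rw [dif_pos h1, dif_pos h1']
      exact GraphProduct.of_commute (doubleAlongLink Γ t₀) (fun p => G p.1.1)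
        (u := ⟨(w.1.1, false), w.2.1, Or.inl rfl⟩)
        (v := ⟨(w'.1.1, false), w'.2.1, Or.inl rfl⟩) ⟨hA, Or.inl rfl⟩ g g'
    · rw [dif_pos h1, dif_neg h1']
      by_cases h2' : w'.1.2 = a
      · rw [dif_pos h2']
        refine GraphProduct.of_commute (doubleAlongLink Γ t₀) (fun p => G p.1.1)
          (u := ⟨(w.1.1, false), w.2.1, Or.inl rfl⟩)
          (v := ⟨(w'.1.1, true), w'.2.1, Or.inr (w'.2.2.resolve_left h1')⟩) ⟨hA, ?_⟩ g g'
        rcases hside with h | h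
        · exact absurd (h.symm.trans h1) h1'
        · exact Or.inr h
      · rw [dif_neg h2']
        simp only [MonoidHom.one_apply]
        exact Commute.one_right _
    · rw [dif_pos h1']
      by_cases h2 : w.1.2 = a
      · rw [dif_neg h1, dif_pos h2]
        refine GraphProduct.of_commute (doubleAlongLink Γ t₀) (fun p => G p.1.1)
          (u := ⟨(w.1.1, true), w.2.1, Or.inr (w.2.2.resolve_left h1)⟩)
          (v := ⟨(w'.1.1, false), w'.2.1, Or.inl rfl⟩) ⟨hA, ?_⟩ g g'
        rcases hside with h | h
        · exact absurd (h.trans h1') h1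
        · exact Or.inr h
      · rw [dif_neg h1, dif_neg h2]
        simp only [MonoidHom.one_apply]
        exact Commute.one_left _
    · by_cases h2 : w.1.2 = a
      · by_cases h2' : w'.1.2 = a
        · rw [dif_neg h1, dif_pos h2, dif_neg h1', dif_pos h2']
          exact GraphProduct.of_commute (doubleAlongLink Γ t₀) (fun p => G p.1.1)
            (u := ⟨(w.1.1, true), w.2.1, Or.inr (w.2.2.resolve_left h1)⟩)
            (v := ⟨(w'.1.1, true), w'.2.1, Or.inr (w'.2.2.resolve_left h1')⟩)
            ⟨hA, Or.inl rfl⟩ g g'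
        · rw [dif_neg h1', dif_neg h2']
          simp only [MonoidHom.one_apply]
          exact Commute.one_right _
      · rw [dif_neg h1, dif_neg h2]
        simp only [MonoidHom.one_apply]
        exact Commute.one_left _)

/-- The vertex data of the candidate embedding: the `false` copy maps identically,
the `true` copy maps by conjugation by `a`. -/
noncomputable def dblMap (p : {p : V × Bool // p.1 ≠ t₀ ∧ (p.2 = false ∨ ¬ Γ.Adj t₀ p.1)}) :
    G p.1.1 →* GraphProduct Γ G :=
  cond p.1.2
    (((MulAut.conj (GraphProduct.of Γ G t₀ a)).toMonoidHom).comp (GraphProduct.of Γ G p.1.1))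
    (GraphProduct.of Γ G p.1.1)

/-- The candidate embedding of the graph product of the double into `GP(Γ)`. -/
noncomputable def dblHom :
    GraphProduct (doubleAlongLink Γ t₀) (fun p => G p.1.1) →* GraphProduct Γ G :=
  GraphProduct.lift _ _ (dblMap Γ G t₀ a) (by
    rintro ⟨⟨u, b⟩, hp⟩ ⟨⟨v, c⟩, hq⟩ ⟨hA, hside⟩ g g'
    dsimp only at hA hside
    cases b <;> cases c
    · exact GraphProduct.of_commute Γ G hA g g'
    · -- b = false, c = true
      have hv : ¬ Γ.Adj t₀ v := hq.2.resolve_left (by simp)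
      have hu : Γ.Adj t₀ u := by
        rcases hside with h | h | h
        · exact absurd h (by simp)
        · exact h
        · exact absurd h hv
      have c1 : Commute (GraphProduct.of Γ G u g) (GraphProduct.of Γ G t₀ a) :=
        GraphProduct.of_commute Γ G hu.symm g a
      have c2 : Commute (GraphProduct.of Γ G u g) (GraphProduct.of Γ G v g') :=
        GraphProduct.of_commute Γ G hA g g'
      exact (c1.mul_right c2).mul_right c1.inv_right
    · -- b = true, c = false
      have hu : ¬ Γ.Adj t₀ u := hp.2.resolve_left (by simp)
      have hv : Γ.Adj t₀ v := by
        rcases hside with h | h | h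
        · exact absurd h (by simp)
        · exact absurd h hu
        · exact h
      have c1 : Commute (GraphProduct.of Γ G v g') (GraphProduct.of Γ G t₀ a) :=
        GraphProduct.of_commute Γ G hv.symm g' a
      have c2 : Commute (GraphProduct.of Γ G v g') (GraphProduct.of Γ G u g) :=
        GraphProduct.of_commute Γ G hA.symm g' g
      exact ((c1.mul_right c2).mul_right c1.inv_right).symm
    · exact (GraphProduct.of_commute Γ G hA g g').map
        ((MulAut.conj (GraphProduct.of Γ G t₀ a)).toMonoidHom))

lemma rHom_iotaHom (ha : a ≠ 1) :
    (rHom Γ G t₀ a).comp (iotaHom Γ G t₀ a) = MonoidHom.id _ := by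
  apply GraphProduct.hom_ext
  rintro ⟨⟨v, b⟩, hp⟩ g
  cases b
  · show rmap Γ G t₀ a (dmap Γ G t₀ a ⟨(v, false), hp⟩) g =
      GraphProduct.of (doubleAlongLink Γ t₀) (fun p => G p.1.1) ⟨(v, false), hp⟩ g
    unfold rmap
    rw [dif_pos (show (dmap Γ G t₀ a ⟨(v, false), hp⟩).1.2 = 1 by simp [dmap])]
    exact GraphProduct.of_congr (doubleAlongLink Γ t₀) (fun p => G p.1.1)
      (Subtype.ext (Prod.ext (by simp [dmap]) rfl)) HEq.rfl
  · show rmap Γ G t₀ a (dmap Γ G t₀ a ⟨(v, true), hp⟩) g =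
      GraphProduct.of (doubleAlongLink Γ t₀) (fun p => G p.1.1) ⟨(v, true), hp⟩ g
    unfold rmap
    rw [dif_neg (show ¬ (dmap Γ G t₀ a ⟨(v, true), hp⟩).1.2 = 1 by simp [dmap, ha]),
      dif_pos (show (dmap Γ G t₀ a ⟨(v, true), hp⟩).1.2 = a by simp [dmap])]
    exact GraphProduct.of_congr (doubleAlongLink Γ t₀) (fun p => G p.1.1)
      (Subtype.ext (Prod.ext (by simp [dmap]) rfl)) HEq.rfl

lemma bigHom_dblHom :
    (bigHom Γ G t₀).comp (dblHom Γ G t₀ a) = inl.comp (iotaHom Γ G t₀ a) := by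
  apply GraphProduct.hom_ext
  rintro ⟨⟨v, b⟩, hp⟩ g
  have hv : v ≠ t₀ := hp.1
  rw [MonoidHom.comp_apply, MonoidHom.comp_apply, dblHom, GraphProduct.lift_of]
  cases b
  · show bigHom Γ G t₀ (GraphProduct.of Γ G v g) =
      inl (GraphProduct.of (multiGraph Γ G t₀) (fun p => G p.1.1)
        (dmap Γ G t₀ a ⟨(v, false), hp⟩) g)
    rw [bigHom, GraphProduct.lift_of, bigMap_ne Γ G t₀ hv]
    rfl
  · have hAv : ¬ Γ.Adj t₀ v := hp.2.resolve_left (by simp)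
    show bigHom Γ G t₀ (GraphProduct.of Γ G t₀ a * GraphProduct.of Γ G v g *
        (GraphProduct.of Γ G t₀ a)⁻¹) =
      inl (GraphProduct.of (multiGraph Γ G t₀) (fun p => G p.1.1)
        (dmap Γ G t₀ a ⟨(v, true), hp⟩) g)
    rw [map_mul, map_mul, map_inv]
    rw [bigHom, GraphProduct.lift_of, GraphProduct.lift_of, bigMap_t Γ G t₀,
      bigMap_ne Γ G t₀ hv, MonoidHom.comp_apply, ← map_inv,
      ← inl_aut (φ := shiftAut Γ G t₀) a, shiftAut_apply, shiftHom_of]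
    refine congrArg inl (GraphProduct.of_congr (multiGraph Γ G t₀) (fun p => G p.1.1)
      ?_ HEq.rfl)
    refine Subtype.ext (Prod.ext rfl ?_)
    show (if Γ.Adj t₀ v then (1 : G t₀) else a * 1) = _
    rw [if_neg hAv, mul_one]
    simp [dmap]

end MainSec

/-- Let `Γ` be a finite simple graph, `t₀` a vertex, and `Γ''` the double of
`Γ ∖ st(t₀)` along the link of `t₀`.  If all vertex groups `G v` are nontrivial and
the vertex groups of `Γ''` are pulled back along the natural projection
`ρ : V(Γ'') → V(Γ) ∖ {t₀}`, then `GP(Γ'', 𝒢 ∘ ρ)` embeds into `GP(Γ, 𝒢)`. -/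
theorem double_embeds_in_graphProduct
    {V : Type*} [Finite V] (Γ : SimpleGraph V) (G : V → Type*) [∀ v, Group (G v)]
    [∀ v, Nontrivial (G v)] (t₀ : V) :
    ∃ f : GraphProduct (doubleAlongLink Γ t₀) (fun p => G p.1.1) →* GraphProduct Γ G,
      Function.Injective f := by
  obtain ⟨a, ha⟩ := exists_ne (1 : G t₀)
  refine ⟨dblHom Γ G t₀ a, ?_⟩
  intro x y hxy
  have h1 : (bigHom Γ G t₀) ((dblHom Γ G t₀ a) x) = (bigHom Γ G t₀) ((dblHom Γ G t₀ a) y) :=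
    congrArg _ hxy
  rw [← MonoidHom.comp_apply, ← MonoidHom.comp_apply, bigHom_dblHom] at h1
  have h2 : iotaHom Γ G t₀ a x = iotaHom Γ G t₀ a y := by
    simpa [MonoidHom.comp_apply] using congrArg SemidirectProduct.left h1
  have h3 := congrArg (rHom Γ G t₀ a) h2
  rw [← MonoidHom.comp_apply, ← MonoidHom.comp_apply, rHom_iotaHom Γ G t₀ a ha] at h3
  simpa using h3
end

section
/- Let Γ be a finite simple graph and 𝒢 = {G_v}, 𝒢' = {G'_v} two collections of countable groups indexed by V(Γ) such that |G_v| = |G'_v| (as cardinals, possibly infinite) for every vertex v. Then the graph product kernels are isomorphic: KP_0(Γ,𝒢) ≅ KP_0(Γ,𝒢'). -/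
open Monoid
open scoped commutatorElement

variable {V : Type*} (Γ : SimpleGraph V) (G : V → Type*) [∀ v, Group (G v)]

set_option linter.unusedSectionVars false

namespace GPK

variable {V : Type*} [DecidableEq V] {n : ℕ}

section Defs

variable (f : V ≃ Fin n) (Γ : SimpleGraph V) (G : V → Type*) [∀ v, Group (G v)]

/-- generator index type -/
abbrev Gen := ((v : V) → G v) × ((v : V) × G v)

variable {G} in
/-- update a tuple by right-multiplication at one coordinate -/
def upd (d : (v : V) → G v) (v : V) (g : G v) : (v : V) → G v :=
  Function.update d v (d v * g)

variable {G}

@[simp] lemma upd_apply_self (d : (v : V) → G v) (v : V) (g : G v) :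
    upd d v g v = d v * g := by simp [upd]

lemma upd_apply_ne (d : (v : V) → G v) {v w : V} (g : G v) (h : w ≠ v) :
    upd d v g w = d w := by simp [upd, Function.update_of_ne h]

@[simp] lemma upd_one (d : (v : V) → G v) (v : V) : upd d v 1 = d := by
  simp [upd]

lemma upd_upd (d : (v : V) → G v) (v : V) (a b : G v) :
    upd (upd d v a) v b = upd d v (a * b) := by
  funext w
  rcases eq_or_ne w v with rfl | h
  · simp [mul_assoc]
  · simp [upd_apply_ne _ _ h]

lemma upd_comm (d : (v : V) → G v) {u v : V} (huv : u ≠ v) (g : G u) (h : G v) :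
    upd (upd d u g) v h = upd (upd d v h) u g := by
  funext w
  rcases eq_or_ne w v with rfl | hv
  · rw [upd_apply_self, upd_apply_ne _ _ (Ne.symm huv), upd_apply_ne _ _ (Ne.symm huv),
      upd_apply_self]
  · rcases eq_or_ne w u with rfl | hu
    · rw [upd_apply_ne _ _ hv, upd_apply_self, upd_apply_self, upd_apply_ne _ _ hv]
    · rw [upd_apply_ne _ _ hv, upd_apply_ne _ _ hu, upd_apply_ne _ _ hu, upd_apply_ne _ _ hv]

lemma upd_eq_mul_mulSingle (d : (v : V) → G v) (v : V) (g : G v) :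
    upd d v g = d * Pi.mulSingle v g := by
  funext w
  rcases eq_or_ne w v with rfl | h
  · simp
  · simp [upd_apply_ne _ _ h, Pi.mulSingle_eq_of_ne h]

/-- triangle relator -/
def tri (d : (v : V) → G v) (v : V) (a b : G v) : FreeGroup (Gen G) :=
  .of (d, ⟨v, a⟩) * .of (upd d v a, ⟨v, b⟩) * (.of (d, ⟨v, a * b⟩))⁻¹

/-- square relator -/
def sq (d : (v : V) → G v) (u v : V) (g : G u) (h : G v) : FreeGroup (Gen G) :=
  .of (d, ⟨u, g⟩) * .of (upd d u g, ⟨v, h⟩) * (.of (upd d v h, ⟨u, g⟩))⁻¹ *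
    (.of (d, ⟨v, h⟩))⁻¹

end Defs

section Defs2

variable (f : V ≃ Fin n) (Γ : SimpleGraph V) (G : V → Type*) [∀ v, Group (G v)]

/-- all relators -/
def rels : Set (FreeGroup (Gen G)) :=
  {x | ∃ d v a b, x = tri d v a b} ∪
  {x | ∃ d u v, ∃ (g : G u) (h : G v), Γ.Adj u v ∧ x = sq d u v g h} ∪
  {x | ∃ d v, ∃ (g : G v), (∀ w, f v ≤ f w → d w = 1) ∧ x = FreeGroup.of (d, ⟨v, g⟩)}

/-- the model group -/
abbrev Q := PresentedGroup (rels f Γ G)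

variable {G}

/-- generators of the model group -/
def qgen (d : (v : V) → G v) (v : V) (g : G v) : Q f Γ G :=
  PresentedGroup.of (d, ⟨v, g⟩)

variable {f Γ}

lemma mk_rel_eq_one {r : FreeGroup (Gen G)} (hr : r ∈ rels f Γ G) :
    PresentedGroup.mk (rels f Γ G) r = 1 := by
  have : r ∈ Subgroup.normalClosure (rels f Γ G) := Subgroup.subset_normalClosure hr
  exact (QuotientGroup.eq_one_iff r).2 this

lemma qtri (d : (v : V) → G v) (v : V) (a b : G v) :
    qgen f Γ d v a * qgen f Γ (upd d v a) v b = qgen f Γ d v (a * b) := by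
  have h := mk_rel_eq_one (G := G) (f := f) (Γ := Γ)
    (Or.inl (Or.inl ⟨d, v, a, b, rfl⟩))
  simp only [tri, map_mul, map_inv] at h
  simpa [qgen, PresentedGroup.of, mul_inv_eq_one] using h

lemma qone (d : (v : V) → G v) (v : V) : qgen f Γ d v (1 : G v) = 1 := by
  have h := qtri (f := f) (Γ := Γ) d v (1 : G v) 1
  simp only [upd_one, mul_one] at h
  exact (mul_eq_left (a := qgen f Γ d v (1 : G v))).mp (by simpa using h)

lemma qsq {u v : V} (d : (w : V) → G w) (hadj : Γ.Adj u v) (g : G u) (h : G v) :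
    qgen f Γ d u g * qgen f Γ (upd d u g) v h =
      qgen f Γ d v h * qgen f Γ (upd d v h) u g := by
  have hr := mk_rel_eq_one (G := G) (f := f) (Γ := Γ)
    (Or.inl (Or.inr ⟨d, u, v, g, h, hadj, rfl⟩))
  simp only [sq, map_mul, map_inv] at hr
  have : (qgen f Γ d u g * qgen f Γ (upd d u g) v h) *
      ((qgen f Γ d v h * qgen f Γ (upd d v h) u g))⁻¹ = 1 := by
    simpa [qgen, PresentedGroup.of, mul_assoc, mul_inv_rev] using hr
  exact mul_inv_eq_one.mp this

lemma qtree {d : (v : V) → G v} {v : V} (g : G v) (hd : ∀ w, f v ≤ f w → d w = 1) :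
    qgen f Γ d v g = 1 :=
  mk_rel_eq_one (Or.inr ⟨d, v, g, hd, rfl⟩)

end Defs2

section Lists

variable (f : V ≃ Fin n) (Γ : SimpleGraph V) (G : V → Type*) [∀ v, Group (G v)]

/-- the vertex list, in the order given by `f` -/
def vlist : List V := (List.finRange n).map f.symm

lemma mem_vlist (v : V) : v ∈ vlist (n := n) f := by
  simp only [vlist, List.mem_map]
  exact ⟨f v, List.mem_finRange _, f.symm_apply_apply v⟩

lemma pairwise_vlist : (vlist (n := n) f).Pairwise (fun a b => f a < f b) := by
  refine List.Pairwise.map f.symm ?_ (List.pairwise_lt_finRange n)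
  intro a b hab
  simpa using hab

lemma pairwise_tail_lt {l : List V} {v : V}
    (h : (v :: l).Pairwise (fun a b => f a < f b)) : ∀ w ∈ l, f v < f w :=
  (List.pairwise_cons.mp h).1

lemma not_mem_tail {l : List V} {v : V}
    (h : (v :: l).Pairwise (fun a b => f a < f b)) : v ∉ l := fun hv =>
  lt_irrefl _ (pairwise_tail_lt f h v hv)

variable {G}

/-- commuting in the graph product -/
lemma gp_commute {u v : V} (hadj : Γ.Adj u v) (g : G u) (h : G v) :
    Commute (GraphProduct.of Γ G u g) (GraphProduct.of Γ G v h) := by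
  rw [← commutatorElement_eq_one_iff_commute]
  have hmem : ⁅Monoid.CoprodI.of g, Monoid.CoprodI.of h⁆ ∈
      Subgroup.normalClosure (graphProductRels Γ G) :=
    Subgroup.subset_normalClosure ⟨u, v, g, h, hadj, rfl⟩
  have : (QuotientGroup.mk' (Subgroup.normalClosure (graphProductRels Γ G)))
      ⁅Monoid.CoprodI.of g, Monoid.CoprodI.of h⁆ = 1 :=
    (QuotientGroup.eq_one_iff _).2 hmem
  rw [map_commutatorElement] at this
  exact this

lemma proj_of (v : V) (g : G v) :
    GraphProduct.proj Γ G (GraphProduct.of Γ G v g) = Pi.mulSingle v g := by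
  have h1 : GraphProduct.proj Γ G (GraphProduct.of Γ G v g) =
      Monoid.CoprodI.lift (fun v => MonoidHom.mulSingle G v) (Monoid.CoprodI.of g) := rfl
  rw [h1, Monoid.CoprodI.lift_of]
  rfl

variable (G)

/-- ordered product of vertex images along a list -/
def sl (l : List V) (d : (v : V) → G v) : GraphProduct Γ G :=
  (l.map fun v => GraphProduct.of Γ G v (d v)).prod

variable {G}

@[simp] lemma sl_nil (d : (v : V) → G v) : sl Γ G [] d = 1 := rfl

lemma sl_cons (v : V) (l : List V) (d : (v : V) → G v) :
    sl Γ G (v :: l) d = GraphProduct.of Γ G v (d v) * sl Γ G l d := by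
  simp [sl]

lemma sl_congr {l : List V} {d d' : (v : V) → G v} (h : ∀ w ∈ l, d w = d' w) :
    sl Γ G l d = sl Γ G l d' := by
  induction l with
  | nil => rfl
  | cons v l ih =>
      rw [sl_cons, sl_cons, h v (List.mem_cons_self),
        ih fun w hw => h w (List.mem_cons_of_mem _ hw)]

lemma sl_ones {l : List V} {d : (v : V) → G v} (h : ∀ w ∈ l, d w = 1) :
    sl Γ G l d = 1 := by
  induction l with
  | nil => rfl
  | cons v l ih =>
      rw [sl_cons, h v (List.mem_cons_self), map_one, one_mul,
        ih fun w hw => h w (List.mem_cons_of_mem _ hw)]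

lemma proj_sl {l : List V} (hl : l.Nodup) (d : (v : V) → G v) :
    GraphProduct.proj Γ G (sl Γ G l d) = fun w => if w ∈ l then d w else 1 := by
  induction l with
  | nil => funext w; simp
  | cons v l ih =>
      rw [sl_cons, map_mul, proj_of, ih hl.of_cons]
      funext w
      rcases eq_or_ne w v with rfl | hwv
      · have : w ∉ l := (List.nodup_cons.mp hl).1
        simp [this]
      · simp [Pi.mulSingle_eq_of_ne hwv, List.mem_cons, hwv]

/-- key lemma: absorbing a generator into the section along the tree -/
lemma sl_mul_of {l : List V} (hl : l.Pairwise (fun a b => f a < f b))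
    {v : V} (hv : v ∈ l) {d : (w : V) → G w} (hd : ∀ w, f v ≤ f w → d w = 1)
    (g : G v) :
    sl Γ G l d * GraphProduct.of Γ G v g = sl Γ G l (upd d v g) := by
  induction l with
  | nil => exact absurd hv (List.not_mem_nil)
  | cons u l ih =>
      rcases eq_or_ne u v with rfl | huv
      · have hdv : d u = 1 := hd u le_rfl
        have hvl : u ∉ l := not_mem_tail f hl
        have htail1 : ∀ w ∈ l, d w = 1 := fun w hw =>
          hd w (le_of_lt (pairwise_tail_lt f hl w hw))
        have htail1' : ∀ w ∈ l, upd d u g w = 1 := fun w hw => by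
          rw [upd_apply_ne _ _ (fun hwu => hvl (by rw [← hwu]; exact hw))]; exact htail1 w hw
        rw [sl_cons, sl_cons, sl_ones Γ htail1, sl_ones Γ htail1',
          upd_apply_self, hdv, one_mul, map_one, one_mul, mul_one]
        rw [one_mul]
      · have hvl : v ∈ l := by
          rcases List.mem_cons.mp hv with h | h
          · exact absurd h.symm huv
          · exact h
        rw [sl_cons, sl_cons, mul_assoc,
          ih (List.pairwise_cons.mp hl).2 hvl, upd_apply_ne _ _ huv]

end Lists

section Phi

variable (f : V ≃ Fin n) (Γ : SimpleGraph V) (G : V → Type*) [∀ v, Group (G v)]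

/-- the chosen section of the projection, as a function -/
def sL (d : (v : V) → G v) : GraphProduct Γ G := sl Γ G (vlist f) d

/-- images of the generators of `Q` -/
def phiFun : Gen G → GraphProduct Γ G := fun a =>
  sL f Γ G a.1 * GraphProduct.of Γ G a.2.1 a.2.2 * (sL f Γ G (upd a.1 a.2.1 a.2.2))⁻¹

variable {Γ}

lemma comm_aux {H : Type*} [Group H] (A B C D x y : H) (h : x * y = y * x) :
    (A * x * B⁻¹) * (B * y * C⁻¹) * (D * x * C⁻¹)⁻¹ * (A * y * D⁻¹)⁻¹ = 1 := by
  have : (A * x * B⁻¹) * (B * y * C⁻¹) * (D * x * C⁻¹)⁻¹ * (A * y * D⁻¹)⁻¹ =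
      A * (x * y) * x⁻¹ * y⁻¹ * A⁻¹ := by group
  rw [this, h]
  group

variable (Γ)

lemma sL_mul_of (d : (w : V) → G w) (v : V) (g : G v) (hd : ∀ w, f v ≤ f w → d w = 1) :
    sL f Γ G d * GraphProduct.of Γ G v g = sL f Γ G (upd d v g) :=
  sl_mul_of f Γ (pairwise_vlist f) (mem_vlist f v) hd g

lemma phi_rels : ∀ r ∈ rels f Γ G, FreeGroup.lift (phiFun f Γ G) r = 1 := by
  rintro r ((⟨d, v, a, b, rfl⟩ | ⟨d, u, v, g, h, hadj, rfl⟩) | ⟨d, v, g, hd, rfl⟩)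
  · simp only [tri, map_mul, map_inv, FreeGroup.lift_apply_of, phiFun]
    rw [upd_upd]
    group
  · simp only [sq, map_mul, map_inv, FreeGroup.lift_apply_of, phiFun]
    rw [upd_comm d hadj.ne g h]
    exact comm_aux _ _ _ _ _ _ (gp_commute Γ hadj g h).eq
  · simp only [FreeGroup.lift_apply_of, phiFun]
    rw [sL_mul_of f Γ G d v g hd]
    group

/-- the homomorphism from the model group onto the kernel -/
def phi : Q f Γ G →* GraphProduct Γ G := PresentedGroup.toGroup (phi_rels f Γ G)

lemma phi_gen (d : (v : V) → G v) (v : V) (g : G v) :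
    phi f Γ G (qgen f Γ d v g) =
      sL f Γ G d * GraphProduct.of Γ G v g * (sL f Γ G (upd d v g))⁻¹ :=
  PresentedGroup.toGroup.of (phi_rels f Γ G)

lemma nodup_vlist : (vlist (n := n) f).Nodup :=
  (pairwise_vlist f).imp fun hab h => by subst h; exact lt_irrefl _ hab

lemma proj_sL (d : (v : V) → G v) :
    GraphProduct.proj Γ G (sL f Γ G d) = d := by
  rw [sL, proj_sl Γ (nodup_vlist f)]
  funext w
  simp [mem_vlist f w]

lemma proj_phi (q : Q f Γ G) : GraphProduct.proj Γ G (phi f Γ G q) = 1 := by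
  have hF : (GraphProduct.proj Γ G).comp (phi f Γ G) = 1 := by
    apply PresentedGroup.ext
    rintro ⟨d, v, g⟩
    show GraphProduct.proj Γ G (phi f Γ G (qgen f Γ d v g)) = 1
    rw [phi_gen, map_mul, map_mul, map_inv, proj_sL, proj_of, proj_sL,
      upd_eq_mul_mulSingle]
    group
  calc GraphProduct.proj Γ G (phi f Γ G q)
      = ((GraphProduct.proj Γ G).comp (phi f Γ G)) q := rfl
    _ = 1 := by rw [hF]; rfl

/-- the quotient map -/
def gmk : Monoid.CoprodI G →* GraphProduct Γ G := QuotientGroup.mk' _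

lemma gmk_surjective : Function.Surjective (gmk Γ G) :=
  QuotientGroup.mk'_surjective _

lemma gmk_of (v : V) (g : G v) :
    gmk Γ G (Monoid.CoprodI.of g) = GraphProduct.of Γ G v g := rfl

lemma sL_one : sL f Γ G 1 = 1 := sl_ones Γ fun _ _ => rfl

lemma exists_rep (x : Monoid.CoprodI G) :
    ∀ d : (v : V) → G v, ∃ q : Q f Γ G,
      sL f Γ G d * gmk Γ G x =
        phi f Γ G q * sL f Γ G (d * GraphProduct.proj Γ G (gmk Γ G x)) := by
  induction x using Monoid.CoprodI.induction_on with
  | one =>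
      intro d
      exact ⟨1, by simp⟩
  | of v g =>
      intro d
      refine ⟨qgen f Γ d v g, ?_⟩
      rw [phi_gen, gmk_of, proj_of, ← upd_eq_mul_mulSingle]
      group
  | mul x y hx hy =>
      intro d
      obtain ⟨qx, hqx⟩ := hx d
      obtain ⟨qy, hqy⟩ := hy (d * GraphProduct.proj Γ G (gmk Γ G x))
      refine ⟨qx * qy, ?_⟩
      rw [map_mul, ← mul_assoc, hqx, mul_assoc, hqy, map_mul, map_mul]
      rw [mul_assoc, mul_assoc]

lemma range_phi : (phi f Γ G).range = GraphProductKernel Γ G := by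
  apply le_antisymm
  · rintro _ ⟨q, rfl⟩
    exact proj_phi f Γ G q
  · rintro k hk
    obtain ⟨x, rfl⟩ := gmk_surjective Γ G k
    obtain ⟨q, hq⟩ := exists_rep f Γ G x 1
    have hk1 : GraphProduct.proj Γ G (gmk Γ G x) = 1 := hk
    rw [hk1, mul_one, sL_one, one_mul, mul_one] at hq
    exact ⟨q, hq.symm⟩

end Phi

section Theta

variable (f : V ≃ Fin n) (Γ : SimpleGraph V) (G : V → Type*) [∀ v, Group (G v)]

/-- the space on which the graph product acts -/
abbrev XSp := ((v : V) → G v) × Q f Γ G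

/-- the action of a vertex element, as a raw function -/
def Bfun (v : V) (g : G v) : XSp f Γ G → XSp f Γ G := fun x =>
  (upd x.1 v g⁻¹, x.2 * (qgen f Γ (upd x.1 v g⁻¹) v g)⁻¹)

lemma Bfun_one (v : V) : Bfun f Γ G v (1 : G v) = id := by
  funext x
  simp [Bfun, qone]

lemma Bfun_mul (v : V) (g h : G v) :
    Bfun f Γ G v (g * h) = Bfun f Γ G v g ∘ Bfun f Γ G v h := by
  funext x
  obtain ⟨d, q⟩ := x
  have h1 : upd (upd d v h⁻¹) v g⁻¹ = upd d v (g * h)⁻¹ := by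
    rw [upd_upd, mul_inv_rev]
  have h2 : upd (upd d v (g * h)⁻¹) v g = upd d v h⁻¹ := by
    rw [upd_upd, mul_inv_rev, inv_mul_cancel_right]
  have h3 : qgen f Γ (upd d v (g * h)⁻¹) v g *
      qgen f Γ (upd d v h⁻¹) v h = qgen f Γ (upd d v (g * h)⁻¹) v (g * h) := by
    rw [← h2, qtri]
  show (upd d v (g * h)⁻¹, q * (qgen f Γ (upd d v (g * h)⁻¹) v (g * h))⁻¹) =
    (upd (upd d v h⁻¹) v g⁻¹, (q * (qgen f Γ (upd d v h⁻¹) v h)⁻¹) *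
      (qgen f Γ (upd (upd d v h⁻¹) v g⁻¹) v g)⁻¹)
  rw [h1]
  refine Prod.ext rfl ?_
  show q * (qgen f Γ (upd d v (g * h)⁻¹) v (g * h))⁻¹ = _
  rw [← h3, mul_inv_rev, ← mul_assoc]

/-- the action of a vertex group -/
def Bhom (v : V) : G v →* Function.End (XSp f Γ G) where
  toFun g := Bfun f Γ G v g
  map_one' := Bfun_one f Γ G v
  map_mul' g h := Bfun_mul f Γ G v g h

/-- the action as permutations -/
def thV (v : V) : G v →* Equiv.Perm (XSp f Γ G) := (Bhom f Γ G v).toHomPerm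

lemma thV_apply (v : V) (g : G v) (x : XSp f Γ G) :
    thV f Γ G v g x = Bfun f Γ G v g x := rfl

lemma Bfun_comm {u v : V} (hadj : Γ.Adj u v) (g : G u) (h : G v) :
    Bfun f Γ G u g ∘ Bfun f Γ G v h = Bfun f Γ G v h ∘ Bfun f Γ G u g := by
  funext x
  obtain ⟨d, q⟩ := x
  have hne : u ≠ v := hadj.ne
  have he' : upd (upd d u g⁻¹) v h⁻¹ = upd (upd d v h⁻¹) u g⁻¹ :=
    upd_comm d hne g⁻¹ h⁻¹
  have h1 : upd (upd (upd d v h⁻¹) u g⁻¹) u g = upd d v h⁻¹ := by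
    rw [upd_upd, inv_mul_cancel, upd_one]
  have h2 : upd (upd (upd d v h⁻¹) u g⁻¹) v h = upd d u g⁻¹ := by
    rw [← he', upd_upd, inv_mul_cancel, upd_one]
  have hq := qsq (f := f) (upd (upd d v h⁻¹) u g⁻¹) hadj g h
  rw [h1, h2] at hq
  show (upd (upd d v h⁻¹) u g⁻¹, (q * (qgen f Γ (upd d v h⁻¹) v h)⁻¹) *
          (qgen f Γ (upd (upd d v h⁻¹) u g⁻¹) u g)⁻¹) =
       (upd (upd d u g⁻¹) v h⁻¹, (q * (qgen f Γ (upd d u g⁻¹) u g)⁻¹) *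
          (qgen f Γ (upd (upd d u g⁻¹) v h⁻¹) v h)⁻¹)
  rw [he']
  refine Prod.ext rfl ?_
  show q * (qgen f Γ (upd d v h⁻¹) v h)⁻¹ *
        (qgen f Γ (upd (upd d v h⁻¹) u g⁻¹) u g)⁻¹ =
      q * (qgen f Γ (upd d u g⁻¹) u g)⁻¹ *
        (qgen f Γ (upd (upd d v h⁻¹) u g⁻¹) v h)⁻¹
  rw [mul_assoc, mul_assoc, ← mul_inv_rev, ← mul_inv_rev, hq]

/-- the action of the whole graph product -/
def th : GraphProduct Γ G →* Equiv.Perm (XSp f Γ G) :=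
  QuotientGroup.lift _ (Monoid.CoprodI.lift (thV f Γ G))
    (Subgroup.normalClosure_le_normal <| by
      rintro x ⟨u, v, g, h, hadj, rfl⟩
      simp only [SetLike.mem_coe, MonoidHom.mem_ker, map_commutatorElement,
        Monoid.CoprodI.lift_of]
      refine commutatorElement_eq_one_iff_commute.mpr ?_
      refine Equiv.ext fun x => ?_
      rw [Equiv.Perm.mul_apply, Equiv.Perm.mul_apply, thV_apply, thV_apply,
        thV_apply, thV_apply]
      have := congrFun (Bfun_comm f Γ G hadj g h) x
      simpa using this)

lemma th_of (v : V) (g : G v) :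
    th f Γ G (GraphProduct.of Γ G v g) = thV f Γ G v g := by
  have h1 : th f Γ G (GraphProduct.of Γ G v g) =
      Monoid.CoprodI.lift (thV f Γ G) (Monoid.CoprodI.of g) := rfl
  rw [h1, Monoid.CoprodI.lift_of]

end Theta

section LemmaA

variable (f : V ≃ Fin n) (Γ : SimpleGraph V) (G : V → Type*) [∀ v, Group (G v)]

/-- merge two tuples along a list of coordinates -/
def merge (l : List V) (e d : (v : V) → G v) : (v : V) → G v :=
  fun w => if w ∈ l then d w else e w

variable {G}

lemma thetaA (l : List V) (hl : l.Pairwise (fun a b => f a < f b))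
    (hup : ∀ w v', w ∉ l → v' ∈ l → f w < f v')
    (e : (v : V) → G v) (he : ∀ w ∈ l, e w = 1) (d : (v : V) → G v)
    (r : Q f Γ G) :
    th f Γ G (sl Γ G l d) (merge G l e d, r) = (e, r) := by
  induction l generalizing e with
  | nil =>
      have hm : merge G [] e d = e := by funext w; simp [merge]
      rw [sl_nil, map_one, hm, Equiv.Perm.one_apply]
  | cons v l ih =>
      have hvl : v ∉ l := not_mem_tail f hl
      set e₁ : (v : V) → G v := Function.update e v (d v) with he₁
      have hm : merge G (v :: l) e d = merge G l e₁ d := by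
        funext w
        rcases eq_or_ne w v with rfl | hwv
        · simp [merge, hvl, he₁]
        · simp only [merge, List.mem_cons, he₁]
          rcases Classical.em (w ∈ l) with h | h
          · simp [h]
          · simp [h, hwv, Function.update_of_ne hwv]
      have he₁' : ∀ w ∈ l, e₁ w = 1 := fun w hw => by
        have hwv : w ≠ v := fun hh => hvl (hh ▸ hw)
        rw [he₁, Function.update_of_ne hwv]
        exact he w (List.mem_cons_of_mem _ hw)
      have hup' : ∀ w v', w ∉ l → v' ∈ l → f w < f v' := by
        intro w v' hw hv'
        rcases eq_or_ne w v with rfl | hwv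
        · exact pairwise_tail_lt f hl v' hv'
        · exact hup w v' (fun hc => by
            rcases List.mem_cons.mp hc with h | h
            · exact hwv h
            · exact hw h) (List.mem_cons_of_mem _ hv')
      have IH := ih (List.pairwise_cons.mp hl).2 hup' e₁ he₁'
      rw [sl_cons, map_mul, Equiv.Perm.mul_apply, hm, IH, th_of, thV_apply]
      have hev : e v = 1 := he v (List.mem_cons_self)
      have h2 : upd e₁ v (d v)⁻¹ = e := by
        funext w
        rcases eq_or_ne w v with rfl | hwv
        · rw [upd_apply_self, he₁, Function.update_self, mul_inv_cancel, hev]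
        · rw [upd_apply_ne _ _ hwv, he₁, Function.update_of_ne hwv]
      have h3 : qgen f Γ e v (d v) = 1 := by
        refine qtree _ fun w hw => ?_
        rcases Classical.em (w ∈ v :: l) with h | h
        · exact he w h
        · exact absurd (hup w v h (List.mem_cons_self)) (not_lt.mpr hw)
      show (upd e₁ v (d v)⁻¹, r * (qgen f Γ (upd e₁ v (d v)⁻¹) v (d v))⁻¹) = (e, r)
      rw [h2, h3]
      simp

lemma thetaA_top (d : (v : V) → G v) (r : Q f Γ G) :
    th f Γ G (sL f Γ G d) (d, r) = (1, r) := by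
  have hm : merge G (vlist (n := n) f) (1 : (v : V) → G v) d = d := by
    funext w; simp [merge, mem_vlist f w]
  have := thetaA f Γ (vlist (n := n) f) (pairwise_vlist f)
    (fun w v' hw _ => absurd (mem_vlist f w) hw)
    (1 : (v : V) → G v) (fun _ _ => rfl) d r
  rw [hm] at this
  exact this

lemma th_phi_gen (d : (v : V) → G v) (v : V) (g : G v) (r : Q f Γ G) :
    th f Γ G (phi f Γ G (qgen f Γ d v g)) (1, r) =
      (1, r * (qgen f Γ d v g)⁻¹) := by
  rw [phi_gen, map_mul, map_mul, map_inv, Equiv.Perm.mul_apply, Equiv.Perm.mul_apply]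
  have s1 : (th f Γ G (sL f Γ G (upd d v g)))⁻¹ ((1 : (v : V) → G v), r) =
      (upd d v g, r) := by
    rw [Equiv.Perm.inv_def, Equiv.symm_apply_eq]
    exact (thetaA_top f Γ (upd d v g) r).symm
  rw [s1, th_of, thV_apply]
  have h2 : upd (upd d v g) v g⁻¹ = d := by
    rw [upd_upd, mul_inv_cancel, upd_one]
  show th f Γ G (sL f Γ G d)
      (upd (upd d v g) v g⁻¹, r * (qgen f Γ (upd (upd d v g) v g⁻¹) v g)⁻¹) = _
  rw [h2]
  exact thetaA_top f Γ d (r * (qgen f Γ d v g)⁻¹)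

lemma th_phi (q : Q f Γ G) (r : Q f Γ G) :
    th f Γ G (phi f Γ G q) (1, r) = (1, r * q⁻¹) := by
  induction q using PresentedGroup.induction_on with
  | H z =>
    induction z using FreeGroup.induction_on generalizing r with
    | C1 => simp
    | of x =>
        obtain ⟨d, v, g⟩ := x
        exact th_phi_gen f Γ d v g r
    | inv_of x hx =>
        rw [map_inv, map_inv, map_inv]
        rw [Equiv.Perm.inv_def, Equiv.symm_apply_eq]
        rw [hx]
        simp
    | mul x y hx hy =>
        rw [map_mul, map_mul, map_mul, Equiv.Perm.mul_apply, hy, hx]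
        simp [mul_inv_rev, mul_assoc]

lemma phi_injective : Function.Injective (phi f Γ G) := by
  refine (injective_iff_map_eq_one _).mpr fun q hq => ?_
  have := th_phi f Γ q 1
  rw [hq, map_one, Equiv.Perm.one_apply] at this
  have h2 : (1 : Q f Γ G) = 1 * q⁻¹ := congrArg Prod.snd this
  rw [one_mul] at h2
  rw [← inv_inv q, ← h2, inv_one]

/-- the model group is isomorphic to the graph product kernel -/
noncomputable def equivKernel : Q f Γ G ≃* GraphProductKernel Γ G :=
  (MonoidHom.ofInjective (phi_injective f Γ (G := G))).trans
    (MulEquiv.subgroupCongr (range_phi f Γ G))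

end LemmaA

section Transport

variable (f : V ≃ Fin n) (Γ : SimpleGraph V)
variable {G G' : V → Type*} [∀ v, Group (G v)] [∀ v, Group (G' v)]
variable (σ : ∀ v, G v ≃ G' v)

/-- transport of a tuple -/
def sig (d : (v : V) → G v) : (v : V) → G' v := fun w => σ w (d w)

/-- transport of a single group element over the base tuple `d` -/
def sg (d : (v : V) → G v) (v : V) (g : G v) : G' v :=
  (σ v (d v))⁻¹ * σ v (d v * g)

/-- transport of generators -/
def betaFun : Gen G → Gen G' := fun a =>
  (sig σ a.1, ⟨a.2.1, sg σ a.1 a.2.1 a.2.2⟩)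

lemma sig_upd (d : (v : V) → G v) (v : V) (g : G v) :
    sig σ (upd d v g) = upd (sig σ d) v (sg σ d v g) := by
  funext w
  rcases eq_or_ne w v with rfl | hwv
  · rw [sig, upd_apply_self, upd_apply_self, sig, sg, mul_inv_cancel_left]
  · rw [sig, upd_apply_ne _ _ hwv, upd_apply_ne _ _ hwv, sig]

lemma sg_mul (d : (v : V) → G v) (v : V) (a b : G v) :
    sg σ d v a * sg σ (upd d v a) v b = sg σ d v (a * b) := by
  simp only [sg, upd_apply_self]
  rw [mul_assoc, ← mul_assoc (σ v (d v * a)), mul_inv_cancel, one_mul, mul_assoc]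

lemma sg_upd_ne {u v : V} (hne : u ≠ v) (d : (w : V) → G w) (g : G u) (h : G v) :
    sg σ (upd d u g) v h = sg σ d v h := by
  simp only [sg, upd_apply_ne _ _ (Ne.symm hne)]

lemma beta_rels (hσ : ∀ v, σ v 1 = 1) : ∀ r ∈ rels f Γ G,
    FreeGroup.lift (fun a => (PresentedGroup.of (rels := rels f Γ G') (betaFun σ a))) r
      = 1 := by
  rintro r ((⟨d, v, a, b, rfl⟩ | ⟨d, u, v, g, h, hadj, rfl⟩) | ⟨d, v, g, hd, rfl⟩)
  · simp only [tri, map_mul, map_inv, FreeGroup.lift_apply_of]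
    rw [mul_inv_eq_one]
    show qgen f Γ (sig σ d) v (sg σ d v a) *
        qgen f Γ (sig σ (upd d v a)) v (sg σ (upd d v a) v b) =
      qgen f Γ (sig σ d) v (sg σ d v (a * b))
    rw [sig_upd, ← sg_mul, ← qtri]
  · simp only [sq, map_mul, map_inv, FreeGroup.lift_apply_of]
    show qgen f Γ (sig σ d) u (sg σ d u g) *
        qgen f Γ (sig σ (upd d u g)) v (sg σ (upd d u g) v h) *
        (qgen f Γ (sig σ (upd d v h)) u (sg σ (upd d v h) u g))⁻¹ *
        (qgen f Γ (sig σ d) v (sg σ d v h))⁻¹ = 1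
    rw [sig_upd, sig_upd, sg_upd_ne σ hadj.ne, sg_upd_ne σ (Ne.symm hadj.ne)]
    rw [qsq (f := f) (sig σ d) hadj (sg σ d u g) (sg σ d v h)]
    group
  · simp only [FreeGroup.lift_apply_of]
    show qgen f Γ (sig σ d) v (sg σ d v g) = 1
    refine qtree _ fun w hw => ?_
    rw [sig, hd w hw, hσ w]

/-- the transported homomorphism between model groups -/
def transHom (hσ : ∀ v, σ v 1 = 1) : Q f Γ G →* Q f Γ G' :=
  PresentedGroup.toGroup (beta_rels f Γ σ hσ)

lemma transHom_of (hσ : ∀ v, σ v 1 = 1) (a : Gen G) :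
    transHom f Γ σ hσ (PresentedGroup.of a) = PresentedGroup.of (betaFun σ a) :=
  PresentedGroup.toGroup.of _

lemma hσ_symm (hσ : ∀ v, σ v 1 = 1) : ∀ v, (σ v).symm 1 = 1 := fun v => by
  rw [← hσ v, Equiv.symm_apply_apply]

lemma beta_inv (a : Gen G) :
    betaFun (fun v => (σ v).symm) (betaFun σ a) = a := by
  obtain ⟨d, v, g⟩ := a
  refine Prod.ext ?_ ?_
  · funext w
    show (σ w).symm (σ w (d w)) = d w
    exact Equiv.symm_apply_apply _ _
  · show Sigma.mk v (sg (fun v => (σ v).symm) (sig σ d) v (sg σ d v g)) = ⟨v, g⟩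
    refine congrArg (Sigma.mk v) ?_
    show ((σ v).symm (σ v (d v)))⁻¹ * (σ v).symm (σ v (d v) * ((σ v (d v))⁻¹ * σ v (d v * g))) = g
    rw [mul_inv_cancel_left, Equiv.symm_apply_apply, Equiv.symm_apply_apply,
      inv_mul_cancel_left]

lemma beta_inv' (a : Gen G') :
    betaFun σ (betaFun (fun v => (σ v).symm) a) = a := by
  have h := beta_inv (fun v => (σ v).symm) a
  have hs : (fun v => ((σ v).symm).symm) = σ := by
    funext v; exact Equiv.symm_symm _
  rw [hs] at h
  exact h

/-- the isomorphism between the two model groups -/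
def transEquiv (hσ : ∀ v, σ v 1 = 1) : Q f Γ G ≃* Q f Γ G' :=
  MonoidHom.toMulEquiv (transHom f Γ σ hσ)
    (transHom f Γ (fun v => (σ v).symm) (hσ_symm σ hσ))
    (by
      apply PresentedGroup.ext
      intro a
      rw [MonoidHom.comp_apply, transHom_of, transHom_of, beta_inv, MonoidHom.id_apply])
    (by
      apply PresentedGroup.ext
      intro a
      rw [MonoidHom.comp_apply, transHom_of, transHom_of, beta_inv', MonoidHom.id_apply])

end Transport

end GPK

/-- Let `Γ` be a finite simple graph and `𝒢 = {G v}`, `𝒢' = {G' v}` two collections of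
countable groups with `|G v| = |G' v|` (as cardinals) for every vertex `v`.  Then the
graph product kernels are isomorphic: `KP_0(Γ,𝒢) ≅ KP_0(Γ,𝒢')`. -/
theorem graphProductKernel_iso_of_card_eq
    {V : Type*} [Finite V] [DecidableEq V] (Γ : SimpleGraph V)
    (G G' : V → Type*) [∀ v, Group (G v)] [∀ v, Group (G' v)]
    [∀ v, Countable (G v)] [∀ v, Countable (G' v)]
    (hcard : ∀ v, Nonempty (G v ≃ G' v)) :
    Nonempty ((GraphProductKernel Γ G) ≃* (GraphProductKernel Γ G')) := by
  classical
  letI : Fintype V := Fintype.ofFinite V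
  let f : V ≃ Fin (Fintype.card V) := Fintype.equivFin V
  let σ : ∀ v, G v ≃ G' v := fun v =>
    ((hcard v).some).trans (Equiv.swap ((hcard v).some 1) 1)
  have hσ : ∀ v, σ v 1 = 1 := fun v => by
    show Equiv.swap ((hcard v).some 1) 1 ((hcard v).some 1) = 1
    exact Equiv.swap_apply_left _ _
  exact ⟨((GPK.equivKernel f Γ (G := G)).symm.trans (GPK.transEquiv f Γ σ hσ)).trans
    (GPK.equivKernel f Γ (G := G'))⟩
end

section
/- Let Γ be a finite simple graph and 𝒢 = {G_v}, 𝒢' = {G'_v} collections of countable groups with |G_v| ≤ |G'_v| ≤ ∞ for every vertex v. Then KP_0(Γ,𝒢) embeds into KP_0(Γ,𝒢'). -/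
open Monoid
open scoped commutatorElement

variable {V : Type*} (Γ : SimpleGraph V) (G : V → Type*) [∀ v, Group (G v)]

namespace GPAux
set_option linter.unusedSectionVars false

open Monoid

variable {V : Type*} [DecidableEq V] (Γ : SimpleGraph V)
  (G : V → Type*) (G' : V → Type*) [∀ v, Group (G v)] [∀ v, Group (G' v)]

/-- Generators of adjacent vertex groups commute in the graph product. -/
theorem of_commute {u v : V} (h : Γ.Adj u v) (g : G u) (g' : G v) :
    Commute (GraphProduct.of Γ G u g) (GraphProduct.of Γ G v g') := by
  rw [← commutatorElement_eq_one_iff_commute]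
  have hrel : (⁅Monoid.CoprodI.of g, Monoid.CoprodI.of g'⁆ : Monoid.CoprodI G) ∈
      Subgroup.normalClosure (graphProductRels Γ G) :=
    Subgroup.subset_normalClosure ⟨u, v, g, g', h, rfl⟩
  have : (⁅GraphProduct.of Γ G u g, GraphProduct.of Γ G v g'⁆ : GraphProduct Γ G) =
      QuotientGroup.mk' _ (⁅Monoid.CoprodI.of g, Monoid.CoprodI.of g'⁆) := by
    rw [map_commutatorElement]; rfl
  rw [this, QuotientGroup.mk'_apply]
  refine (QuotientGroup.eq_one_iff _).mpr ?_
  exact hrel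

theorem mk_one' : @Eq (GraphProduct Γ G) (QuotientGroup.mk 1) (1 : GraphProduct Γ G) := rfl

theorem mk_mul' (z w : Monoid.CoprodI G) : @Eq (GraphProduct Γ G) (QuotientGroup.mk (z * w))
    (@id (GraphProduct Γ G) (QuotientGroup.mk z) * @id (GraphProduct Γ G) (QuotientGroup.mk w)) := rfl

/-- The ordered product of the images of the coordinates of `p`, along a list of
vertices.  (The transversal of the kernel.) -/
def tprod (L : List V) (p : ∀ v, G v) : GraphProduct Γ G :=
  (L.map fun v => GraphProduct.of Γ G v (p v)).prod

theorem tprod_nil (p : ∀ v, G v) : tprod Γ G [] p = 1 := rfl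

theorem tprod_cons (v : V) (L : List V) (p : ∀ v, G v) :
    tprod Γ G (v :: L) p = GraphProduct.of Γ G v (p v) * tprod Γ G L p := by
  simp [tprod]

theorem tprod_one (L : List V) : tprod Γ G L (1 : ∀ v, G v) = 1 := by
  induction L with
  | nil => rfl
  | cons v L ih => rw [tprod_cons, ih, Pi.one_apply, map_one, one_mul]

theorem proj_of (v : V) (g : G v) :
    GraphProduct.proj Γ G (GraphProduct.of Γ G v g) = Pi.mulSingle v g := by
  show QuotientGroup.lift _ _ _ (QuotientGroup.mk (Monoid.CoprodI.of g)) = _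
  rw [QuotientGroup.lift_mk', Monoid.CoprodI.lift_of, MonoidHom.mulSingle_apply]

/-- The image of the transversal word in the direct product. -/
def mpart (L : List V) (p : ∀ v, G v) : ∀ v, G v :=
  (L.map fun v => Pi.mulSingle v (p v)).prod

theorem mpart_nil (p : ∀ v, G v) : mpart G [] p = 1 := rfl

theorem mpart_cons (v : V) (L : List V) (p : ∀ v, G v) :
    mpart G (v :: L) p = Pi.mulSingle v (p v) * mpart G L p := by
  simp [mpart]

theorem proj_tprod (L : List V) (p : ∀ v, G v) :
    GraphProduct.proj Γ G (tprod Γ G L p) = mpart G L p := by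
  induction L with
  | nil => simp [tprod_nil, mpart_nil]
  | cons v L ih => rw [tprod_cons, mpart_cons, map_mul, proj_of, ih]

theorem mpart_apply (L : List V) (hL : L.Nodup) (p : ∀ v, G v) (u : V) :
    mpart G L p u = if u ∈ L then p u else 1 := by
  induction L with
  | nil => simp [mpart_nil]
  | cons v L ih =>
    obtain ⟨hv, hL'⟩ := List.nodup_cons.mp hL
    rw [mpart_cons, Pi.mul_apply, ih hL']
    by_cases h : u = v
    · subst h
      simp [Pi.mulSingle_eq_same, hv]
    · simp [Pi.mulSingle_eq_of_ne h, List.mem_cons, h]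

theorem mpart_eq (L : List V) (hL : L.Nodup) (hLc : ∀ v, v ∈ L) (p : ∀ v, G v) :
    mpart G L p = p := by
  funext u
  rw [mpart_apply G L hL p u, if_pos (hLc u)]

theorem proj_tprod_full (L : List V) (hL : L.Nodup) (hLc : ∀ v, v ∈ L) (p : ∀ v, G v) :
    GraphProduct.proj Γ G (tprod Γ G L p) = p := by
  rw [proj_tprod, mpart_eq G L hL hLc]

/-- Coordinate-wise application of a family of maps. -/
def tmap (τ : ∀ v, G v → G' v) (p : ∀ v, G v) : ∀ v, G' v := fun v => τ v (p v)

theorem tmap_one (τ : ∀ v, G v → G' v) (hτ : ∀ v, τ v 1 = 1) :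
    tmap G G' τ (1 : ∀ v, G v) = 1 := by
  funext u; exact hτ u

theorem tmap_mulSingle (τ : ∀ v, G v → G' v) (p : ∀ v, G v) (v : V) (g : G v) :
    tmap G G' τ (p * Pi.mulSingle v g) =
      tmap G G' τ p * Pi.mulSingle v ((τ v (p v))⁻¹ * τ v (p v * g)) := by
  funext u
  by_cases h : u = v
  · subst h
    simp [tmap, Pi.mulSingle_eq_same, mul_inv_cancel_left]
  · simp [tmap, Pi.mulSingle_eq_of_ne h]

/-- The translation action of the direct product on functions to the graph product. -/
def shiftHom : (∀ v, G v) →* MulAut ((∀ v, G v) → GraphProduct Γ G') where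
  toFun q :=
    { toFun := fun f p => f (p * q)
      invFun := fun f p => f (p * q⁻¹)
      left_inv := fun f => by funext p; simp [mul_assoc]
      right_inv := fun f => by funext p; simp [mul_assoc]
      map_mul' := fun f g => rfl }
  map_one' := by
    ext f p
    simp
  map_mul' q₁ q₂ := by
    ext f p
    simp [mul_assoc]

/-- The wreath-type group receiving the graph product. -/
abbrev Wgrp := ((∀ v, G v) → GraphProduct Γ G') ⋊[shiftHom Γ G G'] (∀ v, G v)

@[simp] theorem shiftHom_apply (q : ∀ v, G v) (f : (∀ v, G v) → GraphProduct Γ G')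
    (p : ∀ v, G v) : shiftHom Γ G G' q f p = f (p * q) := rfl

theorem mul_left_apply (a b : Wgrp Γ G G') (p : ∀ v, G v) :
    (a * b).left p = a.left p * b.left (p * a.right) := rfl

theorem inv_left_apply (a : Wgrp Γ G G') (p : ∀ v, G v) :
    (a⁻¹).left p = (a.left (p * a.right⁻¹))⁻¹ := rfl

variable (τ : ∀ v, G v → G' v) (L : List V)

/-- The building block of the twisted homomorphism. -/
def Fv (v : V) : G v →* Wgrp Γ G G' where
  toFun g :=
    ⟨fun p => tprod Γ G' L (tmap G G' τ p) *
        GraphProduct.of Γ G' v ((τ v (p v))⁻¹ * τ v (p v * g)) *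
        (tprod Γ G' L (tmap G G' τ (p * Pi.mulSingle v g)))⁻¹,
      Pi.mulSingle v g⟩
  map_one' := by
    apply SemidirectProduct.ext
    · funext p
      simp
    · simp
  map_mul' g h := by
    have hmul : ∀ a b : Wgrp Γ G G', a * b =
        ⟨fun p => a.left p * b.left (p * a.right), a.right * b.right⟩ := fun a b => rfl
    rw [hmul]
    apply SemidirectProduct.ext
    · funext p
      simp only [Pi.mul_apply, Pi.mulSingle_eq_same]
      have e1 : p * Pi.mulSingle v g * Pi.mulSingle v h = p * Pi.mulSingle v (g * h) := by
        rw [mul_assoc, ← Pi.mulSingle_mul]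
      have e2 : p v * g * h = p v * (g * h) := mul_assoc _ _ _
      have e3 : (τ v (p v))⁻¹ * τ v (p v * (g * h)) =
          ((τ v (p v))⁻¹ * τ v (p v * g)) * ((τ v (p v * g))⁻¹ * τ v (p v * (g * h))) := by
        rw [mul_assoc, mul_inv_cancel_left]
      rw [e1, e2, e3, map_mul]
      simp only [mul_assoc, inv_mul_cancel_left]
    · exact (Pi.mulSingle_mul v g h)

@[simp] theorem Fv_right (v : V) (g : G v) :
    (Fv Γ G G' τ L v g).right = Pi.mulSingle v g := rfl

theorem Fv_left (v : V) (g : G v) (p : ∀ v, G v) :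
    (Fv Γ G G' τ L v g).left p = tprod Γ G' L (tmap G G' τ p) *
        GraphProduct.of Γ G' v ((τ v (p v))⁻¹ * τ v (p v * g)) *
        (tprod Γ G' L (tmap G G' τ (p * Pi.mulSingle v g)))⁻¹ := rfl

theorem Fv_commute {u v : V} (hadj : Γ.Adj u v) (a : G u) (b : G v) :
    Commute (Fv Γ G G' τ L u a) (Fv Γ G G' τ L v b) := by
  have hne : u ≠ v := hadj.ne
  have hmul : ∀ x y : Wgrp Γ G G', x * y =
      ⟨fun p => x.left p * y.left (p * x.right), x.right * y.right⟩ := fun x y => rfl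
  show _ = _
  rw [hmul, hmul]
  apply SemidirectProduct.ext
  · funext p
    dsimp only
    rw [Fv_left, Fv_left, Fv_left, Fv_left, Fv_right, Fv_right]
    have hpv : (p * Pi.mulSingle u a) v = p v := by
      rw [Pi.mul_apply, Pi.mulSingle_eq_of_ne hne.symm, mul_one]
    have hpu : (p * Pi.mulSingle v b) u = p u := by
      rw [Pi.mul_apply, Pi.mulSingle_eq_of_ne hne, mul_one]
    have hcomm : p * Pi.mulSingle u a * Pi.mulSingle v b
        = p * Pi.mulSingle v b * Pi.mulSingle u a := by
      rw [mul_assoc, mul_assoc, (Pi.mulSingle_commute hne a b).eq]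
    rw [hpv, hpu, hcomm]
    simp only [mul_assoc, inv_mul_cancel_left]
    rw [← mul_assoc ((GraphProduct.of Γ G' u) ((τ u (p u))⁻¹ * τ u (p u * a))),
      (of_commute Γ G' hadj ((τ u (p u))⁻¹ * τ u (p u * a))
        ((τ v (p v))⁻¹ * τ v (p v * b))).eq,
      mul_assoc]
  · exact (Pi.mulSingle_commute hne a b).eq

/-- The twisted homomorphism on the free product. -/
def FonCoprod : Monoid.CoprodI G →* Wgrp Γ G G' :=
  Monoid.CoprodI.lift (fun v => Fv Γ G G' τ L v)

/-- The twisted homomorphism on the graph product. -/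
def FGP : GraphProduct Γ G →* Wgrp Γ G G' :=
  QuotientGroup.lift _ (FonCoprod Γ G G' τ L)
    (Subgroup.normalClosure_le_normal <| by
      rintro x ⟨u, v, g, h, hadj, rfl⟩
      simp only [SetLike.mem_coe, MonoidHom.mem_ker, map_commutatorElement, FonCoprod,
        Monoid.CoprodI.lift_of]
      exact commutatorElement_eq_one_iff_commute.mpr (Fv_commute Γ G G' τ L hadj g h))

theorem FGP_mk (z : Monoid.CoprodI G) :
    FGP Γ G G' τ L (QuotientGroup.mk z) = FonCoprod Γ G G' τ L z :=
  QuotientGroup.lift_mk' _ _ z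

theorem FGP_of (v : V) (g : G v) :
    FGP Γ G G' τ L (GraphProduct.of Γ G v g) = Fv Γ G G' τ L v g := by
  show FGP Γ G G' τ L (QuotientGroup.mk (Monoid.CoprodI.of g)) = _
  rw [FGP_mk, FonCoprod, Monoid.CoprodI.lift_of]

theorem FGP_right (x : GraphProduct Γ G) :
    (FGP Γ G G' τ L x).right = GraphProduct.proj Γ G x := by
  refine QuotientGroup.induction_on x ?_
  intro z
  induction z using Monoid.CoprodI.induction_on with
  | one =>
    rw [mk_one' Γ G, map_one, map_one]
    rfl
  | of v g =>
    show (FGP Γ G G' τ L (GraphProduct.of Γ G v g)).right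
      = GraphProduct.proj Γ G (GraphProduct.of Γ G v g)
    rw [FGP_of, proj_of, Fv_right]
  | mul z w hz hw =>
    rw [mk_mul' Γ G z w, map_mul, map_mul, SemidirectProduct.mul_right]
    exact congrArg₂ (· * ·) hz hw

theorem FGP_left_mem (hL : L.Nodup) (hLc : ∀ v, v ∈ L) (x : GraphProduct Γ G)
    (p : ∀ v, G v) : (FGP Γ G G' τ L x).left p ∈ GraphProductKernel Γ G' := by
  refine QuotientGroup.induction_on x ?_
  intro z
  induction z using Monoid.CoprodI.induction_on generalizing p with
  | one =>
    rw [mk_one' Γ G, map_one]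
    exact one_mem _
  | of v g =>
    show (FGP Γ G G' τ L (GraphProduct.of Γ G v g)).left p ∈ _
    rw [FGP_of, Fv_left, GraphProductKernel, MonoidHom.mem_ker, map_mul, map_mul, map_inv,
      proj_tprod_full Γ G' L hL hLc, proj_tprod_full Γ G' L hL hLc, proj_of,
      tmap_mulSingle]
    exact mul_inv_cancel _
  | mul z w hz hw =>
    rw [mk_mul' Γ G z w, map_mul, mul_left_apply]
    exact mul_mem (hz p) (hw _)

theorem FGP_tprod (hτ : ∀ v, τ v 1 = 1) (l : List V) (hl : l.Nodup) (p q : ∀ v, G v)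
    (hq : ∀ v ∈ l, q v = 1) :
    (FGP Γ G G' τ L (tprod Γ G l p)).left q =
      tprod Γ G' L (tmap G G' τ q) * tprod Γ G' l (tmap G G' τ p) *
        (tprod Γ G' L (tmap G G' τ (q * mpart G l p)))⁻¹ := by
  induction l generalizing q with
  | nil =>
    rw [tprod_nil, tprod_nil, map_one, mpart_nil, mul_one, mul_one]
    show (1 : GraphProduct Γ G') = _
    rw [mul_inv_cancel]
  | cons v l ih =>
    obtain ⟨hv, hl'⟩ := List.nodup_cons.mp hl
    have hqv : q v = 1 := hq v List.mem_cons_self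
    rw [tprod_cons, map_mul, mul_left_apply, FGP_of, Fv_left, Fv_right, hqv, hτ v,
      inv_one, one_mul, one_mul]
    have hq' : ∀ u ∈ l, (q * Pi.mulSingle v (p v)) u = 1 := by
      intro u hu
      have hne : u ≠ v := fun h => hv (h ▸ hu)
      rw [Pi.mul_apply, Pi.mulSingle_eq_of_ne hne, mul_one, hq u (List.mem_cons_of_mem v hu)]
    rw [ih hl' _ hq']
    rw [tprod_cons, mpart_cons]
    have harg : q * Pi.mulSingle v (p v) * mpart G l p
        = q * (Pi.mulSingle v (p v) * mpart G l p) := mul_assoc _ _ _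
    rw [harg]
    have hofv : GraphProduct.of Γ G' v (tmap G G' τ p v)
        = GraphProduct.of Γ G' v (τ v (p v)) := rfl
    rw [hofv]
    simp only [mul_assoc, inv_mul_cancel_left]

theorem FGP_tprod_one (hτ : ∀ v, τ v 1 = 1) (hL : L.Nodup) (hLc : ∀ v, v ∈ L)
    (p : ∀ v, G v) : (FGP Γ G G' τ L (tprod Γ G L p)).left 1 = 1 := by
  rw [FGP_tprod Γ G G' τ L hτ L hL p 1 (fun v _ => rfl), mpart_eq G L hL hLc,
    tmap_one G G' τ hτ, tprod_one, one_mul, one_mul, mul_inv_cancel]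

/-- Schreier generators of the graph product kernel. -/
def gen (p : ∀ v, G v) (v : V) (g : G v) : GraphProduct Γ G :=
  tprod Γ G L p * GraphProduct.of Γ G v g * (tprod Γ G L (p * Pi.mulSingle v g))⁻¹

theorem gen_mem (hL : L.Nodup) (hLc : ∀ v, v ∈ L) (p : ∀ v, G v) (v : V) (g : G v) :
    gen Γ G L p v g ∈ GraphProductKernel Γ G := by
  rw [gen, GraphProductKernel, MonoidHom.mem_ker, map_mul, map_mul, map_inv,
    proj_tprod_full Γ G L hL hLc, proj_tprod_full Γ G L hL hLc, proj_of]
  exact mul_inv_cancel _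

theorem FGP_gen (hτ : ∀ v, τ v 1 = 1) (hL : L.Nodup) (hLc : ∀ v, v ∈ L)
    (p : ∀ v, G v) (v : V) (g : G v) :
    (FGP Γ G G' τ L (gen Γ G L p v g)).left 1 =
      gen Γ G' L (tmap G G' τ p) v ((τ v (p v))⁻¹ * τ v (p v * g)) := by
  rw [gen, map_mul, map_mul, map_inv, FGP_of, mul_left_apply, mul_left_apply, inv_left_apply,
    SemidirectProduct.mul_right, Fv_right]
  simp only [FGP_right, proj_tprod_full Γ G L hL hLc]
  rw [FGP_tprod_one Γ G G' τ L hτ hL hLc]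
  simp only [one_mul]
  rw [mul_inv_cancel, FGP_tprod_one Γ G G' τ L hτ hL hLc, inv_one, mul_one,
    Fv_left, gen, tmap_mulSingle]

theorem ker_le_closure (hL : L.Nodup) (hLc : ∀ v, v ∈ L) :
    GraphProductKernel Γ G ≤
      Subgroup.closure {x : GraphProduct Γ G | ∃ p v g, x = gen Γ G L p v g} := by
  intro k hk
  have key : ∀ x : GraphProduct Γ G, ∀ p : ∀ v, G v,
      tprod Γ G L p * x * (tprod Γ G L (p * GraphProduct.proj Γ G x))⁻¹ ∈
        Subgroup.closure {x : GraphProduct Γ G | ∃ p v g, x = gen Γ G L p v g} := by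
    intro x
    refine QuotientGroup.induction_on x ?_
    intro z
    induction z using Monoid.CoprodI.induction_on with
    | one =>
      intro p
      rw [mk_one' Γ G, map_one, mul_one, mul_one, mul_inv_cancel]
      exact one_mem _
    | of v g =>
      intro p
      have h1 : (QuotientGroup.mk (Monoid.CoprodI.of g) : GraphProduct Γ G)
          = GraphProduct.of Γ G v g := rfl
      rw [h1, proj_of]
      exact Subgroup.subset_closure ⟨p, v, g, rfl⟩
    | mul z w hz hw =>
      intro p
      set Z : GraphProduct Γ G := QuotientGroup.mk z with hZ
      set W : GraphProduct Γ G := QuotientGroup.mk w with hW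
      have h1 : (QuotientGroup.mk (z * w) : GraphProduct Γ G) = Z * W := rfl
      have split : tprod Γ G L p * (Z * W) *
          (tprod Γ G L (p * GraphProduct.proj Γ G (Z * W)))⁻¹
          = (tprod Γ G L p * Z *
              (tprod Γ G L (p * GraphProduct.proj Γ G Z))⁻¹) *
            (tprod Γ G L (p * GraphProduct.proj Γ G Z) * W *
              (tprod Γ G L (p * GraphProduct.proj Γ G Z * GraphProduct.proj Γ G W))⁻¹) := by
        rw [map_mul, ← mul_assoc p (GraphProduct.proj Γ G Z) (GraphProduct.proj Γ G W)]
        simp only [mul_assoc, inv_mul_cancel_left]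
      rw [h1, split]
      exact mul_mem (hz p) (hw _)
  have hk1 : GraphProduct.proj Γ G k = 1 := hk
  have := key k 1
  rw [tprod_one, one_mul, hk1, mul_one, tprod_one, inv_one, mul_one] at this
  exact this

/-- The induced homomorphism between graph product kernels. -/
def Phi (hL : L.Nodup) (hLc : ∀ v, v ∈ L) :
    GraphProductKernel Γ G →* GraphProductKernel Γ G' where
  toFun k := ⟨(FGP Γ G G' τ L (k : GraphProduct Γ G)).left 1,
    FGP_left_mem Γ G G' τ L hL hLc _ 1⟩
  map_one' := by
    apply Subtype.ext
    show (FGP Γ G G' τ L 1).left 1 = 1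
    rw [map_one]
    rfl
  map_mul' a b := by
    apply Subtype.ext
    show (FGP Γ G G' τ L ((a : GraphProduct Γ G) * b)).left 1 = _
    rw [map_mul, mul_left_apply, FGP_right]
    have ha : GraphProduct.proj Γ G (a : GraphProduct Γ G) = 1 := a.2
    rw [ha, mul_one]
    rfl

theorem Phi_apply (hL : L.Nodup) (hLc : ∀ v, v ∈ L) (k : GraphProductKernel Γ G) :
    (Phi Γ G G' τ L hL hLc k : GraphProduct Γ G') =
      (FGP Γ G G' τ L (k : GraphProduct Γ G)).left 1 := rfl

theorem Phi_Phi (σ : ∀ v, G v → G' v) (ρ : ∀ v, G' v → G v)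
    (hσ : ∀ v, σ v 1 = 1) (hρ : ∀ v, ρ v 1 = 1)
    (hρσ : ∀ v (g : G v), ρ v (σ v g) = g)
    (hL : L.Nodup) (hLc : ∀ v, v ∈ L) (k : GraphProductKernel Γ G) :
    Phi Γ G' G ρ L hL hLc (Phi Γ G G' σ L hL hLc k) = k := by
  have Sle : Subgroup.closure {x : GraphProduct Γ G | ∃ p v g, x = gen Γ G L p v g} ≤
      GraphProductKernel Γ G := by
    rw [Subgroup.closure_le]
    rintro x ⟨p, v, g, rfl⟩
    exact gen_mem Γ G L hL hLc p v g
  have hkcl : (k : GraphProduct Γ G) ∈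
      Subgroup.closure {x : GraphProduct Γ G | ∃ p v g, x = gen Γ G L p v g} :=
    ker_le_closure Γ G L hL hLc k.2
  suffices h : ∀ x, x ∈ Subgroup.closure
        {x : GraphProduct Γ G | ∃ p v g, x = gen Γ G L p v g} →
      ∀ (hxk : x ∈ GraphProductKernel Γ G),
      ((Phi Γ G' G ρ L hL hLc (Phi Γ G G' σ L hL hLc ⟨x, hxk⟩)) : GraphProduct Γ G) = x by
    apply Subtype.ext
    exact h _ hkcl k.2
  intro x hx
  refine Subgroup.closure_induction
    (p := fun x _ => ∀ (hxk : x ∈ GraphProductKernel Γ G),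
      ((Phi Γ G' G ρ L hL hLc (Phi Γ G G' σ L hL hLc ⟨x, hxk⟩)) : GraphProduct Γ G) = x)
    ?_ ?_ ?_ ?_ hx
  · rintro x ⟨p, v, g, rfl⟩ hxk
    have h1 : ((Phi Γ G G' σ L hL hLc ⟨gen Γ G L p v g, hxk⟩ : GraphProductKernel Γ G') :
        GraphProduct Γ G') =
        gen Γ G' L (tmap G G' σ p) v ((σ v (p v))⁻¹ * σ v (p v * g)) := by
      rw [Phi_apply]
      exact FGP_gen Γ G G' σ L hσ hL hLc p v g
    rw [Phi_apply, h1, FGP_gen Γ G' G ρ L hρ hL hLc]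
    have e1 : tmap G' G ρ (tmap G G' σ p) = p := by
      funext u
      exact hρσ u (p u)
    have e2 : tmap G G' σ p v = σ v (p v) := rfl
    have e3 : σ v (p v) * ((σ v (p v))⁻¹ * σ v (p v * g)) = σ v (p v * g) :=
      mul_inv_cancel_left _ _
    rw [e1, e2, e3, hρσ, hρσ, inv_mul_cancel_left]
  · intro hxk
    have h1 : (⟨(1 : GraphProduct Γ G), hxk⟩ : GraphProductKernel Γ G) = 1 := rfl
    rw [h1, map_one, map_one, OneMemClass.coe_one]
  · rintro x y hxcl hycl ihx ihy hxyk
    have hxk := Sle hxcl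
    have hyk := Sle hycl
    have h1 : (⟨x * y, hxyk⟩ : GraphProductKernel Γ G) = ⟨x, hxk⟩ * ⟨y, hyk⟩ := rfl
    rw [h1, map_mul, map_mul, Subgroup.coe_mul, ihx hxk, ihy hyk]
  · rintro x hxcl ih hxk
    have hx' := Sle hxcl
    have h1 : (⟨x⁻¹, hxk⟩ : GraphProductKernel Γ G) = (⟨x, hx'⟩ : GraphProductKernel Γ G)⁻¹ :=
      rfl
    rw [h1, map_inv, map_inv, Subgroup.coe_inv, ih hx']

end GPAux

/-- Let `Γ` be a finite simple graph and `𝒢 = {G v}`, `𝒢' = {G' v}` collections of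
countable groups with `|G v| ≤ |G' v| ≤ ∞` for every vertex `v`.  Then `KP_0(Γ,𝒢)`
embeds into `KP_0(Γ,𝒢')`. -/
theorem graphProductKernel_embeds_of_card_le
    {V : Type*} [Finite V] [DecidableEq V] (Γ : SimpleGraph V)
    (G G' : V → Type*) [∀ v, Group (G v)] [∀ v, Group (G' v)]
    [∀ v, Countable (G v)] [∀ v, Countable (G' v)]
    (hcard : ∀ v, Nonempty (G v ↪ G' v)) :
    ∃ f : (GraphProductKernel Γ G) →* (GraphProductKernel Γ G'),
      Function.Injective f := by
  classical
  obtain ⟨_inst⟩ := nonempty_fintype V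
  set L : List V := Finset.univ.toList with hLdef
  have hL : L.Nodup := Finset.nodup_toList _
  have hLc : ∀ v, v ∈ L := fun v => Finset.mem_toList.2 (Finset.mem_univ v)
  have hθ : ∀ v, G v ↪ G' v := fun v => (hcard v).some
  set σ : ∀ v, G v → G' v := fun v g => hθ v g * (hθ v 1)⁻¹ with hσdef
  have hσinj : ∀ v, Function.Injective (σ v) := by
    intro v a b hab
    simp only [hσdef] at hab
    exact (hθ v).injective (mul_right_cancel hab)
  have hσ1 : ∀ v, σ v 1 = 1 := fun v => mul_inv_cancel _
  set ρ : ∀ v, G' v → G v := fun v h => if hex : ∃ g, σ v g = h then hex.choose else 1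
    with hρdef
  have hρσ : ∀ v (g : G v), ρ v (σ v g) = g := by
    intro v g
    have hex : ∃ g', σ v g' = σ v g := ⟨g, rfl⟩
    simp only [hρdef, dif_pos hex]
    exact hσinj v hex.choose_spec
  have hρ1 : ∀ v, ρ v 1 = 1 := by
    intro v
    have h := hρσ v 1
    rwa [hσ1 v] at h
  refine ⟨GPAux.Phi Γ G G' σ L hL hLc, ?_⟩
  intro a b hab
  have h2 := congrArg (GPAux.Phi Γ G' G ρ L hL hLc) hab
  rwa [GPAux.Phi_Phi Γ G G' L σ ρ hσ1 hρ1 hρσ hL hLc,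
    GPAux.Phi_Phi Γ G G' L σ ρ hσ1 hρ1 hρσ hL hLc] at h2
end

section
/- The commutator subgroup of the right-angled Coxeter group C(Γ) embeds into the commutator subgroup of the right-angled Artin group A(Γ). More generally, every graph product kernel KP_0(Γ,𝒢) of countable groups embeds into [A(Γ), A(Γ)]. -/
open Monoid
open scoped commutatorElement

variable {V : Type*} (Γ : SimpleGraph V) (G : V → Type*) [∀ v, Group (G v)]

namespace RaagAux

open Monoid SemidirectProduct

section GP

variable {V : Type*} (Γ : SimpleGraph V) (G : V → Type*) [∀ v, Group (G v)]

theorem of_commute {u v : V} (h : Γ.Adj u v) (g : G u) (g' : G v) :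
    Commute (GraphProduct.of Γ G u g) (GraphProduct.of Γ G v g') := by
  rw [← commutatorElement_eq_one_iff_commute]
  have hmem : (⁅Monoid.CoprodI.of g, Monoid.CoprodI.of g'⁆ : Monoid.CoprodI G) ∈
      Subgroup.normalClosure (graphProductRels Γ G) :=
    Subgroup.subset_normalClosure ⟨u, v, g, g', h, rfl⟩
  have h1 : (QuotientGroup.mk' (Subgroup.normalClosure (graphProductRels Γ G)))
      ⁅Monoid.CoprodI.of g, Monoid.CoprodI.of g'⁆ = 1 := by
    rw [← MonoidHom.mem_ker, QuotientGroup.ker_mk']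
    exact hmem
  rw [map_commutatorElement] at h1
  exact h1

/-- Lift a family of vertex homomorphisms (commuting along edges) to the graph product. -/
def gpLift {H : Type*} [Group H] (f : ∀ v, G v →* H)
    (hf : ∀ {u v : V}, Γ.Adj u v → ∀ (g : G u) (g' : G v), Commute (f u g) (f v g')) :
    GraphProduct Γ G →* H :=
  QuotientGroup.lift _ (Monoid.CoprodI.lift f) (by
    refine Subgroup.normalClosure_le_normal ?_
    rintro x ⟨u, v, g, g', hadj, rfl⟩
    simp only [SetLike.mem_coe, MonoidHom.mem_ker, map_commutatorElement,
      Monoid.CoprodI.lift_of]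
    exact commutatorElement_eq_one_iff_commute.mpr (hf hadj g g'))

@[simp] theorem gpLift_of {H : Type*} [Group H] (f : ∀ v, G v →* H)
    (hf : ∀ {u v : V}, Γ.Adj u v → ∀ (g : G u) (g' : G v), Commute (f u g) (f v g'))
    (v : V) (g : G v) :
    gpLift Γ G f hf (GraphProduct.of Γ G v g) = f v g := by
  have h0 : gpLift Γ G f hf (GraphProduct.of Γ G v g)
      = Monoid.CoprodI.lift f (Monoid.CoprodI.of g) := rfl
  rw [h0, Monoid.CoprodI.lift_of]

theorem gpHom_ext {H : Type*} [Group H] {f g : GraphProduct Γ G →* H}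
    (h : ∀ v, f.comp (GraphProduct.of Γ G v) = g.comp (GraphProduct.of Γ G v)) : f = g :=
  QuotientGroup.monoidHom_ext _ (Monoid.CoprodI.ext_hom _ _ fun v => h v)

theorem gp_induction {P : GraphProduct Γ G → Prop} (x : GraphProduct Γ G) (h1 : P 1)
    (hof : ∀ (v : V) (g : G v), P (GraphProduct.of Γ G v g))
    (hmul : ∀ x y, P x → P y → P (x * y)) : P x := by
  obtain ⟨y, rfl⟩ := QuotientGroup.mk'_surjective
    (Subgroup.normalClosure (graphProductRels Γ G)) x
  induction y using Monoid.CoprodI.induction_on with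
  | one => rw [map_one]; exact h1
  | of i m => exact hof i m
  | mul a b ha hb => rw [map_mul]; exact hmul _ _ ha hb

theorem gp_hom_commute {H : Type*} [Group H] (K : GraphProduct Γ G →* H)
    (hc : ∀ (u v : V) (g : G u) (g' : G v),
      Commute (K (GraphProduct.of Γ G u g)) (K (GraphProduct.of Γ G v g')))
    (x y : GraphProduct Γ G) : Commute (K x) (K y) := by
  have inner : ∀ (u : V) (g : G u) (y : GraphProduct Γ G),
      Commute (K (GraphProduct.of Γ G u g)) (K y) := by
    intro u g y
    refine gp_induction Γ G (P := fun z => Commute (K (GraphProduct.of Γ G u g)) (K z)) y ?_ ?_ ?_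
    · show Commute (K (GraphProduct.of Γ G u g)) (K 1)
      rw [map_one]; exact Commute.one_right _
    · exact fun v g' => hc u v g g'
    · intro a b ha hb
      show Commute (K (GraphProduct.of Γ G u g)) (K (a * b))
      rw [map_mul]; exact ha.mul_right hb
  refine gp_induction Γ G (P := fun z => Commute (K z) (K y)) x ?_ ?_ ?_
  · show Commute (K 1) (K y)
    rw [map_one]; exact Commute.one_left _
  · exact fun v g => inner v g y
  · intro a b ha hb
    show Commute (K (a * b)) (K y)
    rw [map_mul]; exact ha.mul_left hb

theorem gp_commutator_le_ker {H : Type*} [Group H] (K : GraphProduct Γ G →* H)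
    (hc : ∀ (u v : V) (g : G u) (g' : G v),
      Commute (K (GraphProduct.of Γ G u g)) (K (GraphProduct.of Γ G v g'))) :
    commutator (GraphProduct Γ G) ≤ K.ker := by
  rw [commutator_def, Subgroup.commutator_le]
  intro a _ b _
  rw [MonoidHom.mem_ker, map_commutatorElement, commutatorElement_eq_one_iff_commute]
  exact gp_hom_commute Γ G K hc a b

theorem proj_of [DecidableEq V] (v : V) (g : G v) :
    GraphProduct.proj Γ G (GraphProduct.of Γ G v g) = Pi.mulSingle v g := by
  have h0 : GraphProduct.proj Γ G (GraphProduct.of Γ G v g)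
      = Monoid.CoprodI.lift (fun v => MonoidHom.mulSingle G v) (Monoid.CoprodI.of g) := rfl
  rw [h0, Monoid.CoprodI.lift_of]
  rfl

theorem abel_of_eq (x : GraphProduct Γ G) :
    Abelianization.of x = QuotientGroup.mk (s := commutator (GraphProduct Γ G)) x := rfl

theorem ker_proj_le_commutator [Finite V] [DecidableEq V] :
    (GraphProduct.proj Γ G).ker ≤ commutator (GraphProduct Γ G) := by
  haveI := Fintype.ofFinite V
  set w : ((v : V) → G v) →* Abelianization (GraphProduct Γ G) :=
    ∏ v : V, ((Abelianization.of).comp (GraphProduct.of Γ G v)).comp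
      (Pi.evalMonoidHom G v) with hw_def
  have hw : w.comp (GraphProduct.proj Γ G) = Abelianization.of := by
    refine gpHom_ext Γ G ?_
    intro v
    ext g
    simp only [MonoidHom.comp_apply, proj_of]
    rw [hw_def, MonoidHom.finset_prod_apply]
    rw [Finset.prod_eq_single v]
    · simp [Pi.mulSingle_eq_same]
    · intro u _ hu
      simp [Pi.mulSingle_eq_of_ne hu]
    · intro h; exact absurd (Finset.mem_univ v) h
  intro x hx
  have h1 : Abelianization.of x = 1 := by
    rw [← hw, MonoidHom.comp_apply, MonoidHom.mem_ker.mp hx, map_one]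
  rw [abel_of_eq] at h1
  exact (QuotientGroup.eq_one_iff x).mp h1

end GP

section Z2

theorem zmod2_cases : ∀ g : Multiplicative (ZMod 2), g = 1 ∨ g = Multiplicative.ofAdd 1 := by
  decide

theorem m2_sq : ∀ g : Multiplicative (ZMod 2), g * g = 1 := by decide

def zmod2Aux {Q : Type*} [Group Q] (q : Q) (hq : q * q = 1) :
    {f : ℤ →+ Additive Q // f 2 = 0} :=
  ⟨(zmultiplesHom (Additive Q)) (Additive.ofMul q), by
    show (2 : ℤ) • Additive.ofMul q = 0
    rw [two_zsmul, ← ofMul_mul, hq, ofMul_one]⟩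

/-- A homomorphism out of `Multiplicative (ZMod 2)` determined by an element squaring to one. -/
def zmod2Hom {Q : Type*} [Group Q] (q : Q) (hq : q * q = 1) : Multiplicative (ZMod 2) →* Q :=
  AddMonoidHom.toMultiplicativeLeft (ZMod.lift 2 (zmod2Aux q hq))

@[simp] theorem zmod2Hom_gen {Q : Type*} [Group Q] (q : Q) (hq : q * q = 1) :
    zmod2Hom q hq (Multiplicative.ofAdd 1) = q := by
  have h1 : zmod2Hom q hq (Multiplicative.ofAdd 1)
      = Additive.toMul ((ZMod.lift 2 (zmod2Aux q hq)) (1 : ZMod 2)) := rfl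
  rw [h1, show (1 : ZMod 2) = ((1 : ℤ) : ZMod 2) by norm_num, ZMod.lift_coe]
  show Additive.toMul ((1 : ℤ) • Additive.ofMul q) = q
  rw [one_zsmul, toMul_ofMul]

theorem zmod2_hom_ext {M : Type*} [Monoid M] {f g : Multiplicative (ZMod 2) →* M}
    (h : f (Multiplicative.ofAdd 1) = g (Multiplicative.ofAdd 1)) : f = g := by
  refine MonoidHom.ext fun x => ?_
  rcases zmod2_cases x with rfl | rfl
  · rw [map_one, map_one]
  · exact h

theorem zmod2_hom_commute {M : Type*} [Monoid M] (f g : Multiplicative (ZMod 2) →* M)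
    (h : Commute (f (Multiplicative.ofAdd 1)) (g (Multiplicative.ofAdd 1)))
    (a b : Multiplicative (ZMod 2)) : Commute (f a) (g b) := by
  rcases zmod2_cases a with rfl | rfl <;> rcases zmod2_cases b with rfl | rfl
  · simp only [map_one]; exact Commute.one_left _
  · simp only [map_one]; exact Commute.one_left _
  · simp only [map_one]; exact Commute.one_right _
  · exact h

theorem mint_gen_pow (n : ℤ) :
    (Multiplicative.ofAdd (1 : ℤ)) ^ n = Multiplicative.ofAdd n := by
  rw [← ofAdd_zsmul, smul_eq_mul, mul_one]

theorem mint_hom_commute {M : Type*} [Group M] (f g : Multiplicative ℤ →* M)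
    (h : Commute (f (Multiplicative.ofAdd 1)) (g (Multiplicative.ofAdd 1)))
    (a b : Multiplicative ℤ) : Commute (f a) (g b) := by
  have hf : f a = (f (Multiplicative.ofAdd 1)) ^ a.toAdd := by
    rw [← map_zpow, mint_gen_pow, ofAdd_toAdd]
  have hg : g b = (g (Multiplicative.ofAdd 1)) ^ b.toAdd := by
    rw [← map_zpow, mint_gen_pow, ofAdd_toAdd]
  rw [hf, hg]
  exact h.zpow_zpow _ _

theorem inv_zpow_of_sq {M : Type*} [Group M] {x : M} (hx : x * x = 1) (n : ℤ) :
    (x ^ n)⁻¹ = x ^ n := by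
  have h1 : x⁻¹ = x := by
    rw [inv_eq_iff_mul_eq_one, hx]
  rw [← inv_zpow, h1]

end Z2

section Main

variable {V : Type*} [DecidableEq V] (Γ : SimpleGraph V)

abbrev CC := GraphProduct Γ (fun _ : V => Multiplicative (ZMod 2))
abbrev AA := GraphProduct Γ (fun _ : V => Multiplicative ℤ)
abbrev EE (V : Type*) := V → Multiplicative (ZMod 2)

def agen (v : V) : AA Γ := GraphProduct.of Γ _ v (Multiplicative.ofAdd (1 : ℤ))
def sgen (v : V) : CC Γ := GraphProduct.of Γ _ v (Multiplicative.ofAdd (1 : ZMod 2))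
def egen (v : V) : EE V := Pi.mulSingle v (Multiplicative.ofAdd (1 : ZMod 2))

/-- Sign action of `ℤ/2` on `ℤ` (multiplicatively written). -/
def iot : Multiplicative (ZMod 2) →* MulAut (Multiplicative ℤ) :=
  zmod2Hom (MulEquiv.inv (Multiplicative ℤ)) (by
    ext x
    show (MulEquiv.inv (Multiplicative ℤ)) ((MulEquiv.inv (Multiplicative ℤ)) x) = x
    simp)

theorem iot_one_apply (x : Multiplicative ℤ) : iot 1 x = x := by
  rw [map_one]; rfl

theorem iot_gen_apply (x : Multiplicative ℤ) : iot (Multiplicative.ofAdd 1) x = x⁻¹ := by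
  rw [iot, zmod2Hom_gen]; rfl

theorem e_sq (e : EE V) : e * e = 1 := funext fun v => m2_sq (e v)

/-- The inversion endomorphism of `A(Γ)` attached to an element of `(ℤ/2)^V`. -/
def endE (e : EE V) : AA Γ →* AA Γ :=
  gpLift Γ _ (fun v => (GraphProduct.of Γ _ v).comp (iot (e v)).toMonoidHom)
    (by intro u v hadj g g'; exact of_commute Γ _ hadj _ _)

@[simp] theorem endE_of (e : EE V) (v : V) (g : Multiplicative ℤ) :
    endE Γ e (GraphProduct.of Γ _ v g) = GraphProduct.of Γ _ v (iot (e v) g) := by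
  have h : endE Γ e (GraphProduct.of Γ _ v g)
      = Monoid.CoprodI.lift (fun v => (GraphProduct.of Γ (fun _ : V => Multiplicative ℤ) v).comp
          (iot (e v)).toMonoidHom) (Monoid.CoprodI.of g) := rfl
  rw [h, Monoid.CoprodI.lift_of]
  rfl

theorem endE_comp (e e' : EE V) : (endE Γ e).comp (endE Γ e') = endE Γ (e * e') := by
  refine gpHom_ext Γ _ ?_
  intro v; refine MonoidHom.ext fun g => ?_
  simp only [MonoidHom.comp_apply, endE_of]
  rw [Pi.mul_apply, map_mul]
  rfl

theorem endE_one : endE Γ (1 : EE V) = MonoidHom.id (AA Γ) := by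
  refine gpHom_ext Γ _ ?_
  intro v; refine MonoidHom.ext fun g => ?_
  simp only [MonoidHom.comp_apply, endE_of, MonoidHom.id_apply]
  rw [show (1 : EE V) v = 1 from rfl, iot_one_apply]

/-- The action of `(ℤ/2)^V` on `A(Γ)` by inverting generators. -/
def actE : EE V →* MulAut (AA Γ) where
  toFun e :=
    { toFun := endE Γ e
      invFun := endE Γ e
      left_inv := fun x => by
        have h1 : (endE Γ e).comp (endE Γ e) = endE Γ 1 := by rw [endE_comp, e_sq]
        have h2 : endE Γ e (endE Γ e x) = endE Γ 1 x :=
          DFunLike.congr_fun h1 x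
        rw [endE_one] at h2
        exact h2
      right_inv := fun x => by
        have h1 : (endE Γ e).comp (endE Γ e) = endE Γ 1 := by rw [endE_comp, e_sq]
        have h2 : endE Γ e (endE Γ e x) = endE Γ 1 x :=
          DFunLike.congr_fun h1 x
        rw [endE_one] at h2
        exact h2
      map_mul' := map_mul (endE Γ e) }
  map_one' := by
    ext x
    show endE Γ 1 x = x
    rw [endE_one]; rfl
  map_mul' := fun e e' => by
    ext x
    show endE Γ (e * e') x = endE Γ e (endE Γ e' x)
    rw [← endE_comp]; rfl

theorem actE_apply (e : EE V) (x : AA Γ) : actE Γ e x = endE Γ e x := rfl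

/-- Generic computation in a semidirect product. -/
theorem inl_inr_mul {N G : Type*} [Group N] [Group G] (φ : G →* MulAut N)
    (a b : N) (e f : G) :
    (SemidirectProduct.inl a * SemidirectProduct.inr e *
      (SemidirectProduct.inl b * SemidirectProduct.inr f) : N ⋊[φ] G)
      = SemidirectProduct.inl (a * (φ e) b) * SemidirectProduct.inr (e * f) := by
  have hswap : (SemidirectProduct.inr e : N ⋊[φ] G) * SemidirectProduct.inl b
      = SemidirectProduct.inl ((φ e) b) * SemidirectProduct.inr e := by
    rw [SemidirectProduct.inl_aut, map_inv]
    group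
  calc SemidirectProduct.inl a * SemidirectProduct.inr e *
        (SemidirectProduct.inl b * SemidirectProduct.inr f)
      = SemidirectProduct.inl a * (SemidirectProduct.inr e * SemidirectProduct.inl b) *
          SemidirectProduct.inr f := by group
    _ = SemidirectProduct.inl a * (SemidirectProduct.inl ((φ e) b) * SemidirectProduct.inr e) *
          SemidirectProduct.inr f := by rw [hswap]
    _ = (SemidirectProduct.inl a * SemidirectProduct.inl ((φ e) b)) *
          (SemidirectProduct.inr e * SemidirectProduct.inr f) := by group
    _ = _ := by rw [← map_mul, ← map_mul]

def qgen (v : V) : (AA Γ) ⋊[actE Γ] (EE V) :=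
  SemidirectProduct.inl (agen Γ v) * SemidirectProduct.inr (egen v)

theorem actE_egen_agen_same (v : V) :
    (actE Γ (egen v)) (agen Γ v) = (agen Γ v)⁻¹ := by
  rw [actE_apply, agen, endE_of]
  rw [show (egen v) v = Multiplicative.ofAdd 1 from Pi.mulSingle_eq_same v _]
  rw [iot_gen_apply, map_inv]

theorem actE_egen_agen_ne {w w' : V} (h : w ≠ w') :
    (actE Γ (egen w')) (agen Γ w) = agen Γ w := by
  rw [actE_apply, agen, endE_of]
  rw [show (egen w') w = 1 from Pi.mulSingle_eq_of_ne h _]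
  rw [iot_one_apply]

theorem qgen_sq (v : V) : qgen Γ v * qgen Γ v = 1 := by
  rw [qgen, inl_inr_mul, actE_egen_agen_same, e_sq]
  simp

theorem qgen_comm {u v : V} (h : Γ.Adj u v) : Commute (qgen Γ u) (qgen Γ v) := by
  show qgen Γ u * qgen Γ v = qgen Γ v * qgen Γ u
  rw [qgen, qgen, inl_inr_mul, inl_inr_mul]
  rw [actE_egen_agen_ne Γ h.ne', actE_egen_agen_ne Γ h.ne]
  have hag : agen Γ u * agen Γ v = agen Γ v * agen Γ u :=
    (of_commute Γ (fun _ : V => Multiplicative ℤ) h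
      (Multiplicative.ofAdd (1:ℤ)) (Multiplicative.ofAdd (1:ℤ))).eq
  rw [hag, mul_comm (egen u) (egen v)]

/-- The twisted homomorphism `C(Γ) → A(Γ) ⋊ (ℤ/2)^V`. -/
def psi : CC Γ →* (AA Γ) ⋊[actE Γ] (EE V) :=
  gpLift Γ _ (fun v => zmod2Hom (qgen Γ v) (qgen_sq Γ v))
    (by
      intro u v hadj g g'
      refine zmod2_hom_commute _ _ ?_ g g'
      rw [zmod2Hom_gen, zmod2Hom_gen]
      exact qgen_comm Γ hadj)

@[simp] theorem psi_of_gen (v : V) : psi Γ (sgen Γ v) = qgen Γ v := by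
  have h : psi Γ (sgen Γ v)
      = Monoid.CoprodI.lift (fun v => zmod2Hom (qgen Γ v) (qgen_sq Γ v))
          (Monoid.CoprodI.of (Multiplicative.ofAdd (1 : ZMod 2))) := rfl
  rw [h, Monoid.CoprodI.lift_of, zmod2Hom_gen]

theorem sgen_sq (v : V) : sgen Γ v * sgen Γ v = 1 := by
  rw [sgen, ← map_mul, m2_sq, map_one]

/-- The retraction `A(Γ) → C(Γ)`. -/
def pr : AA Γ →* CC Γ :=
  gpLift Γ _ (fun v => zpowersHom (CC Γ) (sgen Γ v))
    (by
      intro u v hadj g g'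
      refine mint_hom_commute _ _ ?_ g g'
      simp only [zpowersHom_apply, toAdd_ofAdd, zpow_one]
      exact of_commute Γ _ hadj _ _)

theorem pr_of (v : V) (g : Multiplicative ℤ) :
    pr Γ (GraphProduct.of Γ _ v g) = sgen Γ v ^ g.toAdd := by
  have h : pr Γ (GraphProduct.of Γ _ v g)
      = Monoid.CoprodI.lift (fun v => zpowersHom (CC Γ) (sgen Γ v)) (Monoid.CoprodI.of g) := rfl
  rw [h, Monoid.CoprodI.lift_of, zpowersHom_apply]

theorem pr_endE (e : EE V) : (pr Γ).comp (endE Γ e) = pr Γ := by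
  refine gpHom_ext Γ _ ?_
  intro v; refine MonoidHom.ext fun g => ?_
  simp only [MonoidHom.comp_apply, endE_of, pr_of]
  rcases zmod2_cases (e v) with h | h <;> rw [h]
  · rw [iot_one_apply]
  · rw [iot_gen_apply, toAdd_inv, zpow_neg, inv_zpow_of_sq (sgen_sq Γ v)]

/-- The retraction `A(Γ) ⋊ (ℤ/2)^V → C(Γ) × (ℤ/2)^V`. -/
def lam : ((AA Γ) ⋊[actE Γ] (EE V)) →* (CC Γ) × (EE V) :=
  SemidirectProduct.lift ((pr Γ).prod 1) ((1 : (EE V) →* CC Γ).prod (MonoidHom.id (EE V)))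
    (by
      intro e
      refine MonoidHom.ext fun a => ?_
      have h1 : pr Γ ((actE Γ e) a) = pr Γ a := DFunLike.congr_fun (pr_endE Γ e) a
      simp only [MonoidHom.comp_apply, MulEquiv.coe_toMonoidHom, MulAut.conj_apply,
        MonoidHom.prod_apply, MonoidHom.one_apply, MonoidHom.id_apply, h1]
      ext <;> simp)

theorem lam_inl (a : AA Γ) : lam Γ (SemidirectProduct.inl a) = (pr Γ a, 1) := by
  rw [lam, SemidirectProduct.lift_inl]; rfl

theorem lam_inr (e : EE V) : lam Γ (SemidirectProduct.inr e) = (1, e) := by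
  rw [lam, SemidirectProduct.lift_inr]; rfl

theorem fst_lam_psi :
    (MonoidHom.fst (CC Γ) (EE V)).comp ((lam Γ).comp (psi Γ)) = MonoidHom.id (CC Γ) := by
  refine gpHom_ext Γ _ ?_
  intro v
  refine zmod2_hom_ext ?_
  simp only [MonoidHom.comp_apply, MonoidHom.id_apply]
  rw [show GraphProduct.of Γ (fun _ : V => Multiplicative (ZMod 2)) v (Multiplicative.ofAdd 1)
      = sgen Γ v from rfl]
  rw [psi_of_gen, qgen, map_mul, lam_inl, lam_inr]
  rw [show agen Γ v = GraphProduct.of Γ (fun _ : V => Multiplicative ℤ) v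
      (Multiplicative.ofAdd (1:ℤ)) from rfl, pr_of]
  simp

theorem psi_right_commutator {x : CC Γ} (hx : x ∈ commutator (CC Γ)) :
    (psi Γ x).right = 1 := by
  have h1 : commutator (CC Γ) ≤ (SemidirectProduct.rightHom.comp (psi Γ)).ker :=
    Abelianization.commutator_subset_ker _
  exact MonoidHom.mem_ker.mp (h1 hx)

/-- The embedding of the commutator subgroup of `C(Γ)` into `A(Γ)`. -/
def theta : ↥(commutator (CC Γ)) →* AA Γ :=
  MonoidHom.mk' (fun x => (psi Γ x.1).left) (by
    rintro ⟨x, hx⟩ ⟨y, hy⟩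
    show (psi Γ (x * y)).left = (psi Γ x).left * (psi Γ y).left
    rw [map_mul, SemidirectProduct.mul_left, psi_right_commutator Γ hx, map_one]
    rfl)

theorem pr_theta (x : ↥(commutator (CC Γ))) : pr Γ (theta Γ x) = x.1 := by
  have h1 : (MonoidHom.fst (CC Γ) (EE V)) ((lam Γ) ((psi Γ) x.1)) = x.1 :=
    DFunLike.congr_fun (fst_lam_psi Γ) x.1
  have h2 : psi Γ x.1 = SemidirectProduct.inl ((psi Γ x.1).left) := by
    conv_lhs => rw [← SemidirectProduct.inl_left_mul_inr_right (psi Γ x.1)]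
    rw [psi_right_commutator Γ x.2, map_one, mul_one]
  rw [h2, lam_inl] at h1
  exact h1

theorem theta_inj : Function.Injective (theta Γ) := by
  intro x y h
  apply Subtype.ext
  rw [← pr_theta Γ x, ← pr_theta Γ y, h]

def endPfun (e : EE V) (m : ∀ _ : V, Multiplicative ℤ) : ∀ _ : V, Multiplicative ℤ :=
  fun v => iot (e v) (m v)

theorem endPfun_invol (e : EE V) (m : ∀ _ : V, Multiplicative ℤ) :
    endPfun e (endPfun e m) = m := by
  funext v
  show iot (e v) (iot (e v) (m v)) = m v
  have h1 : iot (e v) * iot (e v) = 1 := by rw [← map_mul, m2_sq, map_one]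
  calc iot (e v) (iot (e v) (m v)) = (iot (e v) * iot (e v)) (m v) := rfl
    _ = m v := by rw [h1]; rfl

/-- The coordinatewise sign action of `(ℤ/2)^V` on `ℤ^V`. -/
def actP : EE V →* MulAut (∀ _ : V, Multiplicative ℤ) where
  toFun e :=
    { toFun := endPfun e
      invFun := endPfun e
      left_inv := endPfun_invol e
      right_inv := endPfun_invol e
      map_mul' := fun m m' => by
        funext v
        show iot (e v) (m v * m' v) = iot (e v) (m v) * iot (e v) (m' v)
        rw [map_mul] }
  map_one' := by
    ext m v
    show iot ((1 : EE V) v) (m v) = m v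
    rw [show (1 : EE V) v = 1 from rfl, iot_one_apply]
  map_mul' := fun e e' => by
    ext m v
    show iot ((e * e') v) (m v) = iot (e v) (iot (e' v) (m v))
    rw [Pi.mul_apply, map_mul]
    rfl

/-- The induced map on semidirect products over the projection. -/
def smap : ((AA Γ) ⋊[actE Γ] (EE V)) →* ((∀ _ : V, Multiplicative ℤ) ⋊[actP (V := V)] (EE V)) :=
  SemidirectProduct.map (GraphProduct.proj Γ _) (MonoidHom.id (EE V)) (by
    intro e
    refine gpHom_ext Γ _ ?_
    intro v
    refine MonoidHom.ext fun g => ?_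
    show GraphProduct.proj Γ (fun _ : V => Multiplicative ℤ)
          (endE Γ e (GraphProduct.of Γ (fun _ : V => Multiplicative ℤ) v g))
        = actP (MonoidHom.id (EE V) e)
            (GraphProduct.proj Γ (fun _ : V => Multiplicative ℤ)
              (GraphProduct.of Γ (fun _ : V => Multiplicative ℤ) v g))
    rw [endE_of, proj_of, proj_of]
    funext u
    show (Pi.mulSingle v (iot (e v) g) : ∀ _ : V, Multiplicative ℤ) u
        = iot (e u) ((Pi.mulSingle v g : ∀ _ : V, Multiplicative ℤ) u)
    by_cases h : u = v
    · subst h; rw [Pi.mulSingle_eq_same, Pi.mulSingle_eq_same]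
    · rw [show (Pi.mulSingle v (iot (e v) g) : ∀ _ : V, Multiplicative ℤ) u = 1
          from Pi.mulSingle_eq_of_ne h _,
        show (Pi.mulSingle v g : ∀ _ : V, Multiplicative ℤ) u = 1
          from Pi.mulSingle_eq_of_ne h _, map_one])

def rgen (v : V) : ((∀ _ : V, Multiplicative ℤ) ⋊[actP (V := V)] (EE V)) :=
  SemidirectProduct.inl (Pi.mulSingle v (Multiplicative.ofAdd (1:ℤ))) *
    SemidirectProduct.inr (egen v)

theorem smap_inl (a : AA Γ) :
    smap Γ (SemidirectProduct.inl a)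
      = SemidirectProduct.inl (GraphProduct.proj Γ _ a) := by
  rw [smap, SemidirectProduct.map_inl]

theorem smap_inr (e : EE V) :
    smap Γ (SemidirectProduct.inr e) = SemidirectProduct.inr e := by
  rw [smap, SemidirectProduct.map_inr]; rfl

theorem smap_qgen (v : V) : smap Γ (qgen Γ v) = rgen v := by
  rw [qgen, rgen, map_mul, smap_inl, smap_inr]
  rw [show agen Γ v = GraphProduct.of Γ (fun _ : V => Multiplicative ℤ) v
      (Multiplicative.ofAdd (1:ℤ)) from rfl, proj_of]

theorem actP_egen_single_ne {w w' : V} (h : w ≠ w') :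
    (actP (egen w')) (Pi.mulSingle w (Multiplicative.ofAdd (1:ℤ)))
      = Pi.mulSingle w (Multiplicative.ofAdd (1:ℤ)) := by
  funext z
  show iot (egen w' z)
        ((Pi.mulSingle w (Multiplicative.ofAdd (1:ℤ)) : ∀ _ : V, Multiplicative ℤ) z)
      = (Pi.mulSingle w (Multiplicative.ofAdd (1:ℤ)) : ∀ _ : V, Multiplicative ℤ) z
  by_cases hz : z = w'
  · subst hz
    rw [show (Pi.mulSingle w (Multiplicative.ofAdd (1:ℤ)) : ∀ _ : V, Multiplicative ℤ) z = 1
        from Pi.mulSingle_eq_of_ne (Ne.symm h) _, map_one]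
  · rw [show egen w' z = 1 from Pi.mulSingle_eq_of_ne hz _, iot_one_apply]

theorem rgen_comm (u v : V) : Commute (rgen (V := V) u) (rgen v) := by
  rcases eq_or_ne u v with rfl | h
  · exact Commute.refl _
  · show rgen u * rgen v = rgen v * rgen u
    rw [rgen, rgen, inl_inr_mul, inl_inr_mul]
    rw [actP_egen_single_ne h, actP_egen_single_ne (Ne.symm h)]
    rw [mul_comm (Pi.mulSingle u (Multiplicative.ofAdd (1:ℤ)) : ∀ _ : V, Multiplicative ℤ)
      (Pi.mulSingle v (Multiplicative.ofAdd (1:ℤ)))]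
    rw [mul_comm (egen u) (egen v)]

set_option maxHeartbeats 1000000 in
theorem K_gen_commute (u v : V) (g : Multiplicative (ZMod 2)) (g' : Multiplicative (ZMod 2)) :
    Commute
      (((smap Γ).comp (psi Γ))
        (GraphProduct.of Γ (fun _ : V => Multiplicative (ZMod 2)) u g))
      (((smap Γ).comp (psi Γ))
        (GraphProduct.of Γ (fun _ : V => Multiplicative (ZMod 2)) v g')) := by
  refine zmod2_hom_commute
    (((smap Γ).comp (psi Γ)).comp (GraphProduct.of Γ (fun _ : V => Multiplicative (ZMod 2)) u))
    (((smap Γ).comp (psi Γ)).comp (GraphProduct.of Γ (fun _ : V => Multiplicative (ZMod 2)) v))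
    ?_ g g'
  show Commute (smap Γ (psi Γ (sgen Γ u))) (smap Γ (psi Γ (sgen Γ v)))
  rw [psi_of_gen, psi_of_gen, smap_qgen, smap_qgen]
  exact rgen_comm u v

theorem proj_theta (x : ↥(commutator (CC Γ))) :
    GraphProduct.proj Γ (fun _ => Multiplicative ℤ) (theta Γ x) = 1 := by
  have hker : commutator (CC Γ) ≤ ((smap Γ).comp (psi Γ)).ker :=
    gp_commutator_le_ker Γ _ _ (K_gen_commute Γ)
  have h1 : ((smap Γ).comp (psi Γ)) x.1 = 1 := MonoidHom.mem_ker.mp (hker x.2)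
  have h2 : psi Γ x.1 = SemidirectProduct.inl (theta Γ x) := by
    conv_lhs => rw [← SemidirectProduct.inl_left_mul_inr_right (psi Γ x.1)]
    rw [psi_right_commutator Γ x.2, map_one, mul_one]
    rfl
  rw [MonoidHom.comp_apply, h2, smap_inl] at h1
  have h3 := congrArg SemidirectProduct.left h1
  simpa using h3

theorem part1 [Finite V] :
    ∃ f : ↥(commutator (CC Γ)) →* ↥(commutator (AA Γ)), Function.Injective f := by
  refine ⟨MonoidHom.codRestrict (theta Γ) _ (fun x =>
    ker_proj_le_commutator Γ _ (MonoidHom.mem_ker.mpr (proj_theta Γ x))), ?_⟩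
  intro x y h
  exact theta_inj Γ (congrArg Subtype.val h)

end Main

section Part2

/-!
### Part 2: the graph product kernel of countable groups embeds in `[A(Γ), A(Γ)]`

Strategy: replace each vertex group `G v` by `Ĝ v := G v × ℤ` (a countably infinite
group containing `G v` as a retract), choose bijections `q v : Ĝ v ≃ ℤ`, and rewrite
elements of the graph product kernel into `A(Γ)` via a "monodromy" permutation action
on `Ŵ × A(Γ)` (where `Ŵ = ∏ Ĝ v`), sending a letter `g` at state `w` to
`a_v ^ (q (g·w) - q w)`.  A reverse monodromy action of `A(Γ)` on `Ŵ × P̂` *decodes*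
exponents back into group elements (bijectivity of `q` is the key), which proves
injectivity without any normal form theory.
-/

variable {V : Type*} [DecidableEq V] (Γ : SimpleGraph V)
variable (G : V → Type*) [∀ v, Group (G v)]
variable (q : ∀ v, (G v × Multiplicative ℤ) ≃ ℤ)

/-- The stabilized vertex groups. -/
abbrev Ghat (v : V) : Type _ := G v × Multiplicative ℤ

/-- The stabilized graph product `P̂`. -/
abbrev Phat := GraphProduct Γ (fun v => Ghat G v)

/-- The direct product of the stabilized vertex groups. -/
abbrev What := ∀ v : V, Ghat G v

/-- The `A(Γ)`-valued cocycle value of a letter. -/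
def hval (v : V) (z g : Ghat G v) : AA Γ :=
  GraphProduct.of Γ (fun _ : V => Multiplicative ℤ) v
    (Multiplicative.ofAdd (q v (g * z) - q v z))

/-- The forward monodromy: action of a letter on `Ŵ × A(Γ)`. -/
def fwdFun (v : V) (g : Ghat G v) :
    (What G × AA Γ) → (What G × AA Γ) :=
  fun s => (Pi.mulSingle v g * s.1, hval Γ G q v (s.1 v) g * s.2)

theorem fwdFun_comp (v : V) (g g' : Ghat G v) :
    fwdFun Γ G q v g ∘ fwdFun Γ G q v g' = fwdFun Γ G q v (g * g') := by
  funext s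
  have h1 : (Pi.mulSingle v g' * s.1) v = g' * s.1 v := by
    rw [Pi.mul_apply, Pi.mulSingle_eq_same]
  apply Prod.ext
  · show Pi.mulSingle v g * (Pi.mulSingle v g' * s.1) = Pi.mulSingle v (g * g') * s.1
    rw [Pi.mulSingle_mul, mul_assoc]
  · show hval Γ G q v ((Pi.mulSingle v g' * s.1) v) g * (hval Γ G q v (s.1 v) g' * s.2)
        = hval Γ G q v (s.1 v) (g * g') * s.2
    rw [h1, ← mul_assoc]
    congr 1
    rw [hval, hval, hval, ← map_mul, ← ofAdd_add]
    congr 2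
    rw [mul_assoc]
    ring

theorem fwdFun_one (v : V) : fwdFun Γ G q v 1 = id := by
  funext s
  apply Prod.ext
  · show Pi.mulSingle v (1 : Ghat G v) * s.1 = s.1
    rw [Pi.mulSingle_one, one_mul]
  · show hval Γ G q v (s.1 v) 1 * s.2 = s.2
    rw [hval, one_mul, sub_self]
    rw [show Multiplicative.ofAdd (0:ℤ) = 1 from rfl, map_one, one_mul]

/-- The forward monodromy as a permutation. -/
def fwdPerm (v : V) (g : Ghat G v) : Equiv.Perm (What G × AA Γ) where
  toFun := fwdFun Γ G q v g
  invFun := fwdFun Γ G q v g⁻¹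
  left_inv := fun s => by
    have h : fwdFun Γ G q v g⁻¹ ∘ fwdFun Γ G q v g = id := by
      rw [fwdFun_comp, inv_mul_cancel, fwdFun_one]
    exact congrFun h s
  right_inv := fun s => by
    have h : fwdFun Γ G q v g ∘ fwdFun Γ G q v g⁻¹ = id := by
      rw [fwdFun_comp, mul_inv_cancel, fwdFun_one]
    exact congrFun h s

/-- The forward monodromy as a homomorphism on a vertex group. -/
def fwdVertex (v : V) : Ghat G v →* Equiv.Perm (What G × AA Γ) where
  toFun := fwdPerm Γ G q v
  map_one' := by
    refine Equiv.ext fun s => ?_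
    show fwdFun Γ G q v 1 s = s
    rw [fwdFun_one]
    rfl
  map_mul' := fun g g' => by
    refine Equiv.ext fun s => ?_
    show fwdFun Γ G q v (g * g') s = fwdFun Γ G q v g (fwdFun Γ G q v g' s)
    rw [← fwdFun_comp]
    rfl

theorem fwdVertex_commute {u v : V} (huv : Γ.Adj u v) (g : Ghat G u) (g' : Ghat G v) :
    Commute (fwdVertex Γ G q u g) (fwdVertex Γ G q v g') := by
  have hne : u ≠ v := huv.ne
  apply Equiv.ext
  intro s
  show fwdFun Γ G q u g (fwdFun Γ G q v g' s) = fwdFun Γ G q v g' (fwdFun Γ G q u g s)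
  have h1 : (Pi.mulSingle v g' * s.1) u = s.1 u := by
    rw [Pi.mul_apply, Pi.mulSingle_eq_of_ne hne, one_mul]
  have h2 : (Pi.mulSingle u g * s.1) v = s.1 v := by
    rw [Pi.mul_apply, Pi.mulSingle_eq_of_ne (Ne.symm hne), one_mul]
  have hc : Commute (hval Γ G q u (s.1 u) g) (hval Γ G q v (s.1 v) g') :=
    of_commute Γ _ huv _ _
  apply Prod.ext
  · show Pi.mulSingle u g * (Pi.mulSingle v g' * s.1)
        = Pi.mulSingle v g' * (Pi.mulSingle u g * s.1)
    rw [← mul_assoc, ← mul_assoc, (Pi.mulSingle_commute hne g g').eq]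
  · show hval Γ G q u ((Pi.mulSingle v g' * s.1) u) g * (hval Γ G q v (s.1 v) g' * s.2)
        = hval Γ G q v ((Pi.mulSingle u g * s.1) v) g' * (hval Γ G q u (s.1 u) g * s.2)
    rw [h1, h2, ← mul_assoc, ← mul_assoc, hc.eq]

/-- The forward monodromy `P̂ →* Perm (Ŵ × A(Γ))`. -/
def fwdH : Phat Γ G →* Equiv.Perm (What G × AA Γ) :=
  gpLift Γ _ (fwdVertex Γ G q)
    (by intro u v huv g g'; exact fwdVertex_commute Γ G q huv g g')

theorem fwdH_of (v : V) (g : Ghat G v) (s : What G × AA Γ) :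
    fwdH Γ G q (GraphProduct.of Γ _ v g) s = fwdFun Γ G q v g s := by
  have h : fwdH Γ G q (GraphProduct.of Γ _ v g)
      = Monoid.CoprodI.lift (fwdVertex Γ G q) (Monoid.CoprodI.of g) := rfl
  rw [h, Monoid.CoprodI.lift_of]
  rfl

theorem fwdH_fst (x : Phat Γ G) (s : What G × AA Γ) :
    (fwdH Γ G q x s).1 = GraphProduct.proj Γ _ x * s.1 := by
  refine gp_induction Γ _ (P := fun x => ∀ s : What G × AA Γ,
    (fwdH Γ G q x s).1 = GraphProduct.proj Γ _ x * s.1) x ?_ ?_ ?_ s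
  · intro s
    rw [map_one, map_one, one_mul]
    rfl
  · intro v g s
    rw [fwdH_of, proj_of]
    rfl
  · intro a b ha hb s
    rw [map_mul, map_mul]
    show ((fwdH Γ G q a) ((fwdH Γ G q b) s)).1 = _
    rw [ha, hb, mul_assoc]

theorem fwdH_snd (x : Phat Γ G) (s : What G × AA Γ) :
    (fwdH Γ G q x s).2 = (fwdH Γ G q x (s.1, 1)).2 * s.2 := by
  refine gp_induction Γ _ (P := fun x => ∀ s : What G × AA Γ,
    (fwdH Γ G q x s).2 = (fwdH Γ G q x (s.1, 1)).2 * s.2) x ?_ ?_ ?_ s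
  · intro s
    rw [map_one]
    show s.2 = 1 * s.2
    rw [one_mul]
  · intro v g s
    rw [fwdH_of, fwdH_of]
    show hval Γ G q v (s.1 v) g * s.2 = hval Γ G q v (s.1 v) g * 1 * s.2
    rw [mul_one]
  · intro a b ha hb s
    rw [map_mul, Equiv.Perm.mul_apply, Equiv.Perm.mul_apply]
    rw [ha ((fwdH Γ G q b) s), hb s, ha ((fwdH Γ G q b) (s.1, 1)),
      fwdH_fst, fwdH_fst, mul_assoc]

/-- The rewriting cocycle `c(x, w) ∈ A(Γ)`. -/
def cc (x : Phat Γ G) (w : What G) : AA Γ := (fwdH Γ G q x (w, 1)).2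

theorem cc_mul (x y : Phat Γ G) (w : What G) :
    cc Γ G q (x * y) w = cc Γ G q x (GraphProduct.proj Γ _ y * w) * cc Γ G q y w := by
  rw [cc, map_mul]
  show ((fwdH Γ G q x) ((fwdH Γ G q y) (w, 1))).2 = _
  rw [fwdH_snd Γ G q x ((fwdH Γ G q y) (w, 1)), fwdH_fst]
  rfl


theorem cc_one (w : What G) : cc Γ G q 1 w = 1 := by
  rw [cc, map_one]
  rfl

theorem cc_of (v : V) (g : Ghat G v) (w : What G) :
    cc Γ G q (GraphProduct.of Γ _ v g) w = hval Γ G q v (w v) g := by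
  rw [cc, fwdH_of]
  show hval Γ G q v (w v) g * 1 = hval Γ G q v (w v) g
  rw [mul_one]

/-- Decoding an integer back into a vertex group element, at base point `w`. -/
def decode (v : V) (w : What G) (n : ℤ) : Ghat G v :=
  (q v).symm (n + q v (w v)) * (w v)⁻¹

theorem decode_zero (v : V) (w : What G) : decode G q v w 0 = 1 := by
  rw [decode, zero_add, Equiv.symm_apply_apply, mul_inv_cancel]

theorem decode_only_coord {v : V} {w w' : What G} (h : w v = w' v) (n : ℤ) :
    decode G q v w n = decode G q v w' n := by
  rw [decode, decode, h]

theorem decode_mul (v : V) (w : What G) (n m : ℤ) :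
    decode G q v (Pi.mulSingle v (decode G q v w m) * w) n * decode G q v w m
      = decode G q v w (n + m) := by
  have h1 : ((Pi.mulSingle v ((q v).symm (m + q v (w v)) * (w v)⁻¹) : What G) * w) v
      = (q v).symm (m + q v (w v)) := by
    rw [Pi.mul_apply, Pi.mulSingle_eq_same, inv_mul_cancel_right]
  rw [decode, decode, decode, h1, Equiv.apply_symm_apply, ← add_assoc]
  rw [mul_assoc, inv_mul_cancel_left]

/-- The reverse (decoding) monodromy: action of `a_v^n` on `Ŵ × P̂`. -/
def revFun (v : V) (n : ℤ) : (What G × Phat Γ G) → (What G × Phat Γ G) :=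
  fun s => (Pi.mulSingle v (decode G q v s.1 n) * s.1,
    GraphProduct.of Γ _ v (decode G q v s.1 n) * s.2)

theorem revFun_comp (v : V) (n m : ℤ) :
    revFun Γ G q v n ∘ revFun Γ G q v m = revFun Γ G q v (n + m) := by
  funext s
  have key := decode_mul G q v s.1 n m
  apply Prod.ext
  · show Pi.mulSingle v (decode G q v (Pi.mulSingle v (decode G q v s.1 m) * s.1) n) *
        (Pi.mulSingle v (decode G q v s.1 m) * s.1)
      = Pi.mulSingle v (decode G q v s.1 (n + m)) * s.1
    rw [← mul_assoc, ← Pi.mulSingle_mul, key]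
  · show GraphProduct.of Γ _ v (decode G q v (Pi.mulSingle v (decode G q v s.1 m) * s.1) n) *
        (GraphProduct.of Γ _ v (decode G q v s.1 m) * s.2)
      = GraphProduct.of Γ _ v (decode G q v s.1 (n + m)) * s.2
    rw [← mul_assoc, ← map_mul, key]

theorem revFun_zero (v : V) : revFun Γ G q v 0 = id := by
  funext s
  apply Prod.ext
  · show Pi.mulSingle v (decode G q v s.1 0) * s.1 = s.1
    rw [decode_zero, Pi.mulSingle_one, one_mul]
  · show GraphProduct.of Γ _ v (decode G q v s.1 0) * s.2 = s.2
    rw [decode_zero, map_one, one_mul]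

/-- The reverse monodromy as a homomorphism `Multiplicative ℤ →* Perm (Ŵ × P̂)`. -/
def revVertex (v : V) : Multiplicative ℤ →* Equiv.Perm (What G × Phat Γ G) where
  toFun n :=
    { toFun := revFun Γ G q v n.toAdd
      invFun := revFun Γ G q v (-n.toAdd)
      left_inv := fun s => by
        have h : revFun Γ G q v (-n.toAdd) ∘ revFun Γ G q v n.toAdd = id := by
          rw [revFun_comp, neg_add_cancel, revFun_zero]
        exact congrFun h s
      right_inv := fun s => by
        have h : revFun Γ G q v n.toAdd ∘ revFun Γ G q v (-n.toAdd) = id := by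
          rw [revFun_comp, add_neg_cancel, revFun_zero]
        exact congrFun h s }
  map_one' := by
    refine Equiv.ext fun s => ?_
    show revFun Γ G q v (Multiplicative.toAdd 1) s = s
    rw [show Multiplicative.toAdd (1 : Multiplicative ℤ) = 0 from rfl, revFun_zero]
    rfl
  map_mul' := fun n m => by
    refine Equiv.ext fun s => ?_
    show revFun Γ G q v (n * m).toAdd s = revFun Γ G q v n.toAdd (revFun Γ G q v m.toAdd s)
    rw [show (n * m).toAdd = n.toAdd + m.toAdd from rfl, ← revFun_comp]
    rfl

theorem revVertex_commute {u v : V} (huv : Γ.Adj u v) (n m : Multiplicative ℤ) :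
    Commute (revVertex Γ G q u n) (revVertex Γ G q v m) := by
  have hne : u ≠ v := huv.ne
  apply Equiv.ext
  intro s
  show revFun Γ G q u n.toAdd (revFun Γ G q v m.toAdd s)
      = revFun Γ G q v m.toAdd (revFun Γ G q u n.toAdd s)
  set dv := decode G q v s.1 m.toAdd with hdv
  set du := decode G q u s.1 n.toAdd with hdu
  have h1 : decode G q u (Pi.mulSingle v dv * s.1) n.toAdd = du := by
    refine decode_only_coord G q ?_ _
    rw [Pi.mul_apply, Pi.mulSingle_eq_of_ne hne, one_mul]
  have h2 : decode G q v (Pi.mulSingle u du * s.1) m.toAdd = dv := by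
    refine decode_only_coord G q ?_ _
    rw [Pi.mul_apply, Pi.mulSingle_eq_of_ne (Ne.symm hne), one_mul]
  apply Prod.ext
  · show Pi.mulSingle u (decode G q u (Pi.mulSingle v dv * s.1) n.toAdd) *
        (Pi.mulSingle v dv * s.1)
      = Pi.mulSingle v (decode G q v (Pi.mulSingle u du * s.1) m.toAdd) *
        (Pi.mulSingle u du * s.1)
    rw [h1, h2, ← mul_assoc, ← mul_assoc, (Pi.mulSingle_commute hne du dv).eq]
  · show GraphProduct.of Γ _ u (decode G q u (Pi.mulSingle v dv * s.1) n.toAdd) *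
        (GraphProduct.of Γ _ v dv * s.2)
      = GraphProduct.of Γ _ v (decode G q v (Pi.mulSingle u du * s.1) m.toAdd) *
        (GraphProduct.of Γ _ u du * s.2)
    rw [h1, h2, ← mul_assoc, ← mul_assoc, (of_commute Γ _ huv du dv).eq]

/-- The reverse monodromy `A(Γ) →* Perm (Ŵ × P̂)`. -/
def revR : AA Γ →* Equiv.Perm (What G × Phat Γ G) :=
  gpLift Γ _ (revVertex Γ G q)
    (by intro u v huv n m; exact revVertex_commute Γ G q huv n m)

theorem revR_of (v : V) (e : Multiplicative ℤ) (s : What G × Phat Γ G) :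
    revR Γ G q (GraphProduct.of Γ _ v e) s = revFun Γ G q v e.toAdd s := by
  have h : revR Γ G q (GraphProduct.of Γ _ v e)
      = Monoid.CoprodI.lift (revVertex Γ G q) (Monoid.CoprodI.of e) := rfl
  rw [h, Monoid.CoprodI.lift_of]
  rfl

/-- The master identity: the reverse monodromy decodes the rewriting cocycle. -/
theorem master (x : Phat Γ G) :
    ∀ (w : What G) (p : Phat Γ G),
      revR Γ G q (cc Γ G q x w) (w, p) = (GraphProduct.proj Γ _ x * w, x * p) := by
  refine gp_induction Γ _ (P := fun x => ∀ (w : What G) (p : Phat Γ G),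
    revR Γ G q (cc Γ G q x w) (w, p) = (GraphProduct.proj Γ _ x * w, x * p)) x ?_ ?_ ?_
  · intro w p
    rw [cc_one, map_one, map_one, one_mul, one_mul]
    rfl
  · intro v g w p
    rw [cc_of, hval, revR_of, proj_of]
    show (Pi.mulSingle v (decode G q v w (Multiplicative.toAdd
        (Multiplicative.ofAdd (q v (g * w v) - q v (w v))))) * w,
      GraphProduct.of Γ _ v (decode G q v w (Multiplicative.toAdd
        (Multiplicative.ofAdd (q v (g * w v) - q v (w v))))) * p) = _
    have hdec : decode G q v w (Multiplicative.toAdd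
        (Multiplicative.ofAdd (q v (g * w v) - q v (w v)))) = g := by
      rw [toAdd_ofAdd, decode, sub_add_cancel, Equiv.symm_apply_apply,
        mul_inv_cancel_right]
    rw [hdec]
  · intro a b ha hb w p
    rw [cc_mul, map_mul, Equiv.Perm.mul_apply, hb w p, ha (GraphProduct.proj Γ _ b * w) (b * p),
      map_mul, mul_assoc, mul_assoc]

/-- Injectivity of the rewriting on the graph product kernel. -/
theorem cc_inj {x y : Phat Γ G} (hx : GraphProduct.proj Γ _ x = 1)
    (hy : GraphProduct.proj Γ _ y = 1) (h : cc Γ G q x 1 = cc Γ G q y 1) : x = y := by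
  have h1 := master Γ G q x 1 1
  have h2 := master Γ G q y 1 1
  rw [h] at h1
  have h3 := h1.symm.trans h2
  have h4 := congrArg Prod.snd h3
  simpa using h4

theorem proj_cc (x : Phat Γ G) :
    ∀ w : What G, GraphProduct.proj Γ (fun _ : V => Multiplicative ℤ) (cc Γ G q x w)
      = fun v => Multiplicative.ofAdd
          (q v ((GraphProduct.proj Γ _ x * w) v) - q v (w v)) := by
  refine gp_induction Γ _ (P := fun x => ∀ w : What G,
    GraphProduct.proj Γ (fun _ : V => Multiplicative ℤ) (cc Γ G q x w)
      = fun v => Multiplicative.ofAdd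
          (q v ((GraphProduct.proj Γ _ x * w) v) - q v (w v))) x ?_ ?_ ?_
  · intro w
    rw [cc_one, map_one, map_one, one_mul]
    funext v
    rw [sub_self]
    rfl
  · intro v g w
    rw [cc_of, hval, proj_of, proj_of]
    funext u
    by_cases h : u = v
    · subst h
      rw [Pi.mulSingle_eq_same]
      congr 2
      rw [Pi.mul_apply, Pi.mulSingle_eq_same]
    · rw [show (Pi.mulSingle v (Multiplicative.ofAdd (q v (g * w v) - q v (w v)))
            : ∀ _ : V, Multiplicative ℤ) u = 1 from Pi.mulSingle_eq_of_ne h _]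
      rw [show (Pi.mulSingle v g * w) u = w u from by
        rw [Pi.mul_apply, Pi.mulSingle_eq_of_ne h, one_mul]]
      rw [sub_self]
      rfl
  · intro a b ha hb w
    rw [cc_mul, map_mul, ha (GraphProduct.proj Γ _ b * w), hb w]
    funext v
    rw [Pi.mul_apply, map_mul, ← ofAdd_add]
    congr 1
    rw [mul_assoc]
    ring


/-- The rewriting homomorphism on the graph product kernel of `P̂`. -/
def khat [Finite V] : ↥(GraphProductKernel Γ (fun v => Ghat G v)) →* AA Γ :=
  MonoidHom.mk' (fun x => cc Γ G q x.1 1) (by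
    rintro ⟨x, hx⟩ ⟨y, hy⟩
    show cc Γ G q (x * y) 1 = cc Γ G q x 1 * cc Γ G q y 1
    have hy1 : GraphProduct.proj Γ _ y = 1 := MonoidHom.mem_ker.mp hy
    rw [cc_mul, hy1, one_mul])

theorem khat_inj [Finite V] : Function.Injective (khat Γ G q) := by
  rintro ⟨x, hx⟩ ⟨y, hy⟩ h
  apply Subtype.ext
  exact cc_inj Γ G q (MonoidHom.mem_ker.mp hx) (MonoidHom.mem_ker.mp hy) h

theorem proj_khat [Finite V] (x : ↥(GraphProductKernel Γ (fun v => Ghat G v))) :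
    GraphProduct.proj Γ (fun _ : V => Multiplicative ℤ) (khat Γ G q x) = 1 := by
  have h := proj_cc Γ G q x.1 1
  rw [show GraphProduct.proj Γ _ x.1 = 1 from MonoidHom.mem_ker.mp x.2, one_mul] at h
  show GraphProduct.proj Γ (fun _ : V => Multiplicative ℤ) (cc Γ G q x.1 1) = 1
  rw [h]
  funext v
  rw [sub_self]
  rfl

/-- The stabilization embedding `P(Γ,𝒢) → P̂`. -/
def ihom : GraphProduct Γ G →* Phat Γ G :=
  gpLift Γ G (fun v => (GraphProduct.of Γ (fun v => Ghat G v) v).comp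
      (MonoidHom.inl (G v) (Multiplicative ℤ)))
    (by intro u v huv g g'; exact of_commute Γ _ huv _ _)

theorem ihom_of (v : V) (g : G v) :
    ihom Γ G (GraphProduct.of Γ G v g)
      = GraphProduct.of Γ (fun v => Ghat G v) v (g, 1) := by
  have h : ihom Γ G (GraphProduct.of Γ G v g)
      = Monoid.CoprodI.lift (fun v => (GraphProduct.of Γ (fun v => Ghat G v) v).comp
          (MonoidHom.inl (G v) (Multiplicative ℤ))) (Monoid.CoprodI.of g) := rfl
  rw [h, Monoid.CoprodI.lift_of]
  rfl

/-- The retraction `P̂ → P(Γ,𝒢)`. -/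
def rhom : Phat Γ G →* GraphProduct Γ G :=
  gpLift Γ _ (fun v => (GraphProduct.of Γ G v).comp (MonoidHom.fst (G v) (Multiplicative ℤ)))
    (by intro u v huv g g'; exact of_commute Γ _ huv _ _)

theorem rhom_of (v : V) (g : Ghat G v) :
    rhom Γ G (GraphProduct.of Γ (fun v => Ghat G v) v g)
      = GraphProduct.of Γ G v g.1 := by
  have h : rhom Γ G (GraphProduct.of Γ (fun v => Ghat G v) v g)
      = Monoid.CoprodI.lift
          (fun v => (GraphProduct.of Γ G v).comp (MonoidHom.fst (G v) (Multiplicative ℤ)))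
          (Monoid.CoprodI.of g) := rfl
  rw [h, Monoid.CoprodI.lift_of]
  rfl

theorem rhom_ihom : (rhom Γ G).comp (ihom Γ G) = MonoidHom.id (GraphProduct Γ G) := by
  refine gpHom_ext Γ G ?_
  intro v
  refine MonoidHom.ext fun g => ?_
  show rhom Γ G (ihom Γ G (GraphProduct.of Γ G v g)) = GraphProduct.of Γ G v g
  rw [ihom_of, rhom_of]

theorem ihom_inj : Function.Injective (ihom Γ G) := by
  intro x y h
  have hx : rhom Γ G (ihom Γ G x) = x := DFunLike.congr_fun (rhom_ihom Γ G) x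
  have hy : rhom Γ G (ihom Γ G y) = y := DFunLike.congr_fun (rhom_ihom Γ G) y
  rw [← hx, ← hy, h]

/-- The coordinatewise stabilization on direct products. -/
def wmap : ((v : V) → G v) →* What G :=
  MonoidHom.mk' (fun m v => (m v, 1)) (by
    intro a b
    funext v
    show ((a * b) v, (1 : Multiplicative ℤ)) = (a v, 1) * (b v, 1)
    rw [Pi.mul_apply, Prod.mk_mul_mk, mul_one])

theorem proj_comp_ihom :
    (GraphProduct.proj Γ (fun v => Ghat G v)).comp (ihom Γ G)
      = (wmap G).comp (GraphProduct.proj Γ G) := by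
  refine gpHom_ext Γ G ?_
  intro v
  refine MonoidHom.ext fun g => ?_
  show GraphProduct.proj Γ (fun v => Ghat G v) (ihom Γ G (GraphProduct.of Γ G v g))
      = wmap G (GraphProduct.proj Γ G (GraphProduct.of Γ G v g))
  rw [ihom_of, proj_of, proj_of]
  funext u
  show (Pi.mulSingle v ((g, 1) : Ghat G v) : What G) u
      = (((Pi.mulSingle v g : (v : V) → G v) u, 1) : Ghat G u)
  by_cases h : u = v
  · subst h
    rw [Pi.mulSingle_eq_same, Pi.mulSingle_eq_same]
  · rw [show (Pi.mulSingle v ((g, 1) : Ghat G v) : What G) u = 1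
        from Pi.mulSingle_eq_of_ne h _,
      show (Pi.mulSingle v g : (v : V) → G v) u = 1 from Pi.mulSingle_eq_of_ne h _]
    rfl

/-- Part 2 of the main theorem. -/
theorem part2 [Finite V] [∀ v, Countable (G v)] :
    ∃ f : ↥(GraphProductKernel Γ G) →* ↥(commutator (AA Γ)), Function.Injective f := by
  have hq : ∀ v : V, Nonempty ((G v × Multiplicative ℤ) ≃ ℤ) := by
    intro v
    obtain ⟨d⟩ := nonempty_denumerable (G v × Multiplicative ℤ)
    exact ⟨(@Denumerable.eqv _ d).trans (Denumerable.eqv ℤ).symm⟩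
  let q : ∀ v, (G v × Multiplicative ℤ) ≃ ℤ := fun v => (hq v).some
  have hj : ∀ x : ↥(GraphProductKernel Γ G),
      ((ihom Γ G).domRestrict (GraphProductKernel Γ G)) x
        ∈ GraphProductKernel Γ (fun v => Ghat G v) := by
    intro x
    refine MonoidHom.mem_ker.mpr ?_
    show GraphProduct.proj Γ (fun v => Ghat G v) (ihom Γ G x.1) = 1
    have h1 : GraphProduct.proj Γ (fun v => Ghat G v) (ihom Γ G x.1)
        = wmap G (GraphProduct.proj Γ G x.1) := DFunLike.congr_fun (proj_comp_ihom Γ G) x.1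
    rw [h1, MonoidHom.mem_ker.mp x.2, map_one]
  let j : ↥(GraphProductKernel Γ G) →* ↥(GraphProductKernel Γ (fun v => Ghat G v)) :=
    MonoidHom.codRestrict ((ihom Γ G).domRestrict (GraphProductKernel Γ G)) _ hj
  refine ⟨MonoidHom.codRestrict ((khat Γ G q).comp j) _ (fun x =>
    ker_proj_le_commutator Γ _ (MonoidHom.mem_ker.mpr (proj_khat Γ G q (j x)))), ?_⟩
  intro x y h
  have h1 : khat Γ G q (j x) = khat Γ G q (j y) := congrArg Subtype.val h
  have h2 := khat_inj Γ G q h1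
  have h3 : ihom Γ G x.1 = ihom Γ G y.1 := congrArg Subtype.val h2
  exact Subtype.ext (ihom_inj Γ G h3)

end Part2

end RaagAux

/-- The commutator subgroup of the right-angled Coxeter group `C(Γ)` embeds into the
commutator subgroup of the right-angled Artin group `A(Γ)`; more generally, every graph
product kernel `KP_0(Γ,𝒢)` of countable groups embeds into `[A(Γ), A(Γ)]`. -/
theorem graphProductKernel_embeds_in_raag_commutator
    {V : Type*} [Finite V] [DecidableEq V] (Γ : SimpleGraph V)
    (G : V → Type*) [∀ v, Group (G v)] [∀ v, Countable (G v)] :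
    (∃ f : commutator (GraphProduct Γ (fun _ => Multiplicative (ZMod 2))) →*
        commutator (GraphProduct Γ (fun _ => Multiplicative ℤ)),
      Function.Injective f) ∧
    (∃ f : (GraphProductKernel Γ G) →*
        commutator (GraphProduct Γ (fun _ => Multiplicative ℤ)),
      Function.Injective f) := by
  exact ⟨RaagAux.part1 Γ, RaagAux.part2 Γ G⟩
end
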